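/- arXiv:2510.23864 — 5 statements merged into one kernel-verified Lean document; each statement's English description precedes it below -/
import Mathlib

section
/- Let Γ be a countable group acting by group automorphisms on a countable abelian group D, and let G = D ⋊ Γ denote the semidirect product. Then G is icc if and only if both of the following hold: (i) for every nontrivial n ∈ D, the orbit Γ·n = {g·n : g ∈ Γ} is infinite; and (ii) for every g ≠ e in Γ such that D_g is finite, the conjugacy class of g in Γ is infinite. -/
/-- A group is icc if every conjugacy class other than that of the identity is infinite. -/
def IsIcc (G : Type*) [Group G] : Prop :=
  ∀ x : G, x ≠ 1 → {y : G | IsConj x y}.Infinite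

private lemma conj_formula {Γ D : Type*} [Group Γ] [CommGroup D] (φ : Γ →* MulAut D)
    (m n : D) (h g : Γ) :
    (⟨m, h⟩ : D ⋊[φ] Γ) * ⟨n, g⟩ * (⟨m, h⟩ : D ⋊[φ] Γ)⁻¹ =
      ⟨m * φ h n * φ (h * g * h⁻¹) m⁻¹, h * g * h⁻¹⟩ := by
  ext <;> simp [mul_assoc, map_mul]

private lemma phi_conj {Γ D : Type*} [Group Γ] [CommGroup D] (φ : Γ →* MulAut D)
    (c g : Γ) (m : D) :
    φ (c * g * c⁻¹) m * m⁻¹ = φ c (φ g (φ c⁻¹ m) * (φ c⁻¹ m)⁻¹) := by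
  simp only [map_mul, map_inv, MulAut.mul_apply, MulAut.inv_apply_self, MulAut.apply_inv_self]

theorem stmt_2 {Γ D : Type*} [Group Γ] [Countable Γ] [CommGroup D] [Countable D]
    (φ : Γ →* MulAut D) :
    IsIcc (D ⋊[φ] Γ) ↔
      ((∀ d : D, d ≠ 1 → (Set.range fun g : Γ => φ g d).Infinite) ∧
        (∀ g : Γ, g ≠ 1 →
          (Set.range fun d : D => φ g d * d⁻¹).Finite → {h : Γ | IsConj g h}.Infinite)) := by
  constructor
  · intro hicc
    constructor
    · -- (i)
      intro d hd
      have hx : (⟨d, 1⟩ : D ⋊[φ] Γ) ≠ 1 := by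
        intro h; apply hd
        simpa using congrArg SemidirectProduct.left h
      have hcl := hicc _ hx
      by_contra hfin
      rw [Set.not_infinite] at hfin
      apply hcl
      apply Set.Finite.subset (hfin.image (fun a => (⟨a, 1⟩ : D ⋊[φ] Γ)))
      rintro y hy
      obtain ⟨c, hc⟩ := isConj_iff.mp hy
      obtain ⟨m, h⟩ := c
      rw [conj_formula] at hc
      refine ⟨φ h d, ⟨h, rfl⟩, ?_⟩
      rw [← hc]
      simp [mul_comm, mul_assoc]
    · -- (ii)
      intro g hg hDg
      by_contra hCfin
      rw [Set.not_infinite] at hCfin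
      have hx : (⟨1, g⟩ : D ⋊[φ] Γ) ≠ 1 := by
        intro h; apply hg
        simpa using congrArg SemidirectProduct.right h
      apply hicc _ hx
      have hfinT : (⋃ k ∈ {h : Γ | IsConj g h},
          (fun a => (⟨a, k⟩ : D ⋊[φ] Γ)) ''
            ((fun x => x⁻¹) '' (Set.range fun m : D => φ k m * m⁻¹))).Finite := by
        apply Set.Finite.biUnion hCfin
        intro k hk
        obtain ⟨c, hc⟩ := isConj_iff.mp hk
        have hsub : (Set.range fun m : D => φ k m * m⁻¹) ⊆
            (fun x => φ c x) '' (Set.range fun d : D => φ g d * d⁻¹) := by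
          rintro _ ⟨m, rfl⟩
          refine ⟨φ g (φ c⁻¹ m) * (φ c⁻¹ m)⁻¹, ⟨φ c⁻¹ m, rfl⟩, ?_⟩
          rw [← hc]
          exact (phi_conj φ c g m).symm
        exact (((hDg.image _).subset hsub).image _).image _
      apply Set.Finite.subset hfinT
      rintro y hy
      obtain ⟨c, hc⟩ := isConj_iff.mp hy
      obtain ⟨m, h⟩ := c
      rw [conj_formula] at hc
      simp only [Set.mem_iUnion]
      refine ⟨h * g * h⁻¹, isConj_iff.mpr ⟨h, rfl⟩,
        m * φ (h * g * h⁻¹) m⁻¹,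
        ⟨φ (h * g * h⁻¹) m * m⁻¹, ⟨m, rfl⟩, by simp [mul_comm]⟩, ?_⟩
      rw [← hc]
      congr 1
      simp
  · rintro ⟨h1, h2⟩ x hx
    obtain ⟨n, g⟩ := x
    by_cases hg : g = 1
    · subst hg
      have hn : n ≠ 1 := by
        intro h; apply hx; ext <;> simp [h]
      have hinf : ((fun a => (⟨a, 1⟩ : D ⋊[φ] Γ)) ''
          (Set.range fun h : Γ => φ h n)).Infinite :=
        Set.Infinite.image
          (fun a _ b _ hab => by simpa using congrArg SemidirectProduct.left hab)
          (h1 n hn)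
      apply hinf.mono
      rintro _ ⟨_, ⟨h, rfl⟩, rfl⟩
      refine isConj_iff.mpr ⟨⟨1, h⟩, ?_⟩
      rw [conj_formula]
      congr 1 <;> simp
    · by_cases hC : {h : Γ | IsConj g h}.Finite
      · have hDg : (Set.range fun d : D => φ g d * d⁻¹).Infinite :=
          fun hfin => h2 g hg hfin hC
        have hinf : ((fun a => (⟨n * a⁻¹, g⟩ : D ⋊[φ] Γ)) ''
            (Set.range fun d : D => φ g d * d⁻¹)).Infinite := by
          apply Set.Infinite.image _ hDg
          intro a _ b _ hab
          have h' := congrArg SemidirectProduct.left hab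
          simp only at h'
          exact inv_injective (mul_left_cancel h')
        apply hinf.mono
        rintro _ ⟨_, ⟨m, rfl⟩, rfl⟩
        refine isConj_iff.mpr ⟨⟨m, 1⟩, ?_⟩
        rw [conj_formula]
        congr 1 <;> simp [mul_comm, mul_assoc, mul_left_comm]
      · intro hfin
        apply hC
        apply Set.Finite.subset (hfin.image SemidirectProduct.right)
        rintro k hk
        obtain ⟨c, hc⟩ := isConj_iff.mp hk
        refine ⟨(⟨1, c⟩ : D ⋊[φ] Γ) * ⟨n, g⟩ * (⟨1, c⟩ : D ⋊[φ] Γ)⁻¹,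
          isConj_iff.mpr ⟨_, rfl⟩, ?_⟩
        rw [conj_formula]
        simpa using hc
end

section
/- Let n ≥ 1 and let Γ ≤ GL(n,ℤ) be a subgroup containing a nontrivial element g none of whose complex eigenvalues is a root of unity, acting on ℤⁿ by matrix multiplication. Then: every nontrivial Γ-orbit in ℤⁿ is infinite; for every h ≠ I in Γ the subgroup D_h = {h·m − m : m ∈ ℤⁿ} = Im(h − I) is infinite; and consequently the semidirect product ℤⁿ ⋊ Γ is an icc group. -/
/-- The additive automorphism of `ℤⁿ` given by an element of `GL(n, ℤ)`. -/
def glAddAut (n : ℕ) : Matrix.GeneralLinearGroup (Fin n) ℤ →* Multiplicative (AddAut (Fin n → ℤ)) where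
  toFun A := Multiplicative.ofAdd
    { toFun := fun v => (A : Matrix (Fin n) (Fin n) ℤ).mulVec v
      invFun := fun v => ((A⁻¹ : Matrix.GeneralLinearGroup (Fin n) ℤ) : Matrix (Fin n) (Fin n) ℤ).mulVec v
      left_inv := fun v => by
        show ((A⁻¹ : Matrix.GeneralLinearGroup (Fin n) ℤ) : Matrix (Fin n) (Fin n) ℤ).mulVec
          ((A : Matrix (Fin n) (Fin n) ℤ).mulVec v) = v
        rw [Matrix.mulVec_mulVec, show ((A⁻¹ : Matrix.GeneralLinearGroup (Fin n) ℤ) : Matrix (Fin n) (Fin n) ℤ) *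
            (A : Matrix (Fin n) (Fin n) ℤ) = 1 from A.inv_mul]
        exact Matrix.one_mulVec v
      right_inv := fun v => by
        show (A : Matrix (Fin n) (Fin n) ℤ).mulVec
          (((A⁻¹ : Matrix.GeneralLinearGroup (Fin n) ℤ) : Matrix (Fin n) (Fin n) ℤ).mulVec v) = v
        rw [Matrix.mulVec_mulVec, show (A : Matrix (Fin n) (Fin n) ℤ) *
            ((A⁻¹ : Matrix.GeneralLinearGroup (Fin n) ℤ) : Matrix (Fin n) (Fin n) ℤ) = 1 from A.mul_inv]
        exact Matrix.one_mulVec v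
      map_add' := fun v w => Matrix.mulVec_add _ v w }
  map_one' := by
    apply Multiplicative.toAdd.injective
    ext v
    simp [Matrix.one_mulVec]
  map_mul' := fun A B => by
    apply Multiplicative.toAdd.injective
    ext v
    simp [Matrix.mulVec_mulVec]

/-- The action of a subgroup of `GL(n, ℤ)` on `Multiplicative (ℤⁿ)` by automorphisms,
    giving rise to the semidirect product `ℤⁿ ⋊ Γ`. -/
def glMulAut (n : ℕ) (Γ : Subgroup (Matrix.GeneralLinearGroup (Fin n) ℤ)) :
    Γ →* MulAut (Multiplicative (Fin n → ℤ)) :=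
  MonoidHom.mk' (fun A => AddEquiv.toMultiplicative (Multiplicative.toAdd (glAddAut n (A : Matrix.GeneralLinearGroup (Fin n) ℤ))))
    (by
      intro A B
      ext v
      simp [glAddAut, Matrix.mulVec_mulVec])

section Helpers
open Matrix Polynomial


lemma evalCharpoly {n : ℕ} (M : Matrix (Fin n) (Fin n) ℂ) (z : ℂ) :
    M.charpoly.eval z = (z • (1 : Matrix (Fin n) (Fin n) ℂ) - M).det := by
  rw [Matrix.charpoly, _root_.eval_det, Matrix.matPolyEquiv_charmatrix]
  simp [smul_one_eq_diagonal, scalar_apply]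

lemma memSpectrumIffRoot {n : ℕ} (M : Matrix (Fin n) (Fin n) ℂ) (z : ℂ) :
    z ∈ spectrum ℂ M ↔ M.charpoly.IsRoot z := by
  rw [spectrum.mem_iff, Polynomial.IsRoot, evalCharpoly,
    show (algebraMap ℂ (Matrix (Fin n) (Fin n) ℂ)) z = z • 1 by
      simp [Matrix.algebraMap_eq_diagonal, smul_one_eq_diagonal]]
  rw [Matrix.isUnit_iff_isUnit_det, isUnit_iff_ne_zero, not_ne_iff]

lemma noFixed {n : ℕ} (g : Matrix.GeneralLinearGroup (Fin n) ℤ)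
    (heig : ∀ z : ℂ,
      (((g : Matrix (Fin n) (Fin n) ℤ)).map (Int.cast : ℤ → ℂ)).charpoly.IsRoot z →
      ∀ k : ℕ, 0 < k → z ^ k ≠ 1)
    {v : Fin n → ℤ} (hv : v ≠ 0) {m : ℕ} (hm : 0 < m)
    (h : ((g : Matrix (Fin n) (Fin n) ℤ) ^ m).mulVec v = v) : False := by
  set A : Matrix (Fin n) (Fin n) ℤ := (g : Matrix (Fin n) (Fin n) ℤ) with hA
  set M : Matrix (Fin n) (Fin n) ℂ := A.map (Int.cast : ℤ → ℂ) with hM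
  set vc : Fin n → ℂ := fun i => (v i : ℂ) with hvcdef
  have hvc : vc ≠ 0 := by
    intro h0
    apply hv
    funext i
    have := congrFun h0 i
    simpa [hvcdef] using this
  have hpow : M ^ m = (A ^ m).map (Int.cast : ℤ → ℂ) := by
    have : M = (Int.castRingHom ℂ).mapMatrix A := rfl
    rw [this, ← map_pow]
    rfl
  have hMm : (M ^ m).mulVec vc = vc := by
    funext i
    rw [hpow]
    have := congrFun h i
    simp only [Matrix.mulVec, dotProduct, Matrix.map_apply, hvcdef]
    push_cast
    rw [← this]
    simp [Matrix.mulVec, dotProduct]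
  have h1 : (1 : ℂ) ∈ spectrum ℂ (M ^ m) := by
    rw [spectrum.mem_iff]
    intro hu
    rw [Matrix.isUnit_iff_isUnit_det, isUnit_iff_ne_zero] at hu
    apply hu
    rw [← Matrix.exists_mulVec_eq_zero_iff]
    refine ⟨vc, hvc, ?_⟩
    simp [Matrix.sub_mulVec, hMm, Matrix.one_mulVec]
  rw [spectrum.map_pow_of_pos M hm] at h1
  obtain ⟨z, hz, hzm⟩ := h1
  exact heig z ((memSpectrumIffRoot M z).mp hz) m hm hzm

lemma glMulVecInj {n : ℕ} (u : Matrix.GeneralLinearGroup (Fin n) ℤ) :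
    Function.Injective fun w => (u : Matrix (Fin n) (Fin n) ℤ).mulVec w := by
  intro x y hxy
  have h2 := congrArg (fun w => ((u⁻¹ : Matrix.GeneralLinearGroup (Fin n) ℤ) :
    Matrix (Fin n) (Fin n) ℤ).mulVec w) hxy
  simpa [Matrix.mulVec_mulVec, u.inv_mul, Matrix.one_mulVec] using h2

lemma orbitInf {n : ℕ} (Γ : Subgroup (Matrix.GeneralLinearGroup (Fin n) ℤ))
    (g : Γ)
    (heig : ∀ z : ℂ,
      (((g : Matrix.GeneralLinearGroup (Fin n) ℤ) : Matrix (Fin n) (Fin n) ℤ).map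
        (Int.cast : ℤ → ℂ)).charpoly.IsRoot z → ∀ k : ℕ, 0 < k → z ^ k ≠ 1)
    (v : Fin n → ℤ) (hv : v ≠ 0) :
    (Set.range fun A : Γ =>
      ((A : Matrix.GeneralLinearGroup (Fin n) ℤ) : Matrix (Fin n) (Fin n) ℤ).mulVec v).Infinite := by
  set u : Matrix.GeneralLinearGroup (Fin n) ℤ := (g : Matrix.GeneralLinearGroup (Fin n) ℤ) with hu
  set B : Matrix (Fin n) (Fin n) ℤ := (u : Matrix (Fin n) (Fin n) ℤ) with hB
  have key : ∀ a b : ℕ, a < b → (B ^ a).mulVec v ≠ (B ^ b).mulVec v := by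
    intro a b hab hfe
    refine noFixed u heig hv (m := b - a) (Nat.sub_pos_of_lt hab) ?_
    apply glMulVecInj (u ^ a)
    show ((u ^ a : Matrix.GeneralLinearGroup (Fin n) ℤ) :
      Matrix (Fin n) (Fin n) ℤ).mulVec ((B ^ (b - a)).mulVec v) = _
    rw [Units.val_pow_eq_pow_val, Matrix.mulVec_mulVec, ← pow_add,
      Nat.add_sub_cancel' (le_of_lt hab)]
    exact hfe.symm
  apply Set.infinite_of_injective_forall_mem
    (f := fun k : ℕ => (B ^ k).mulVec v)

  · intro a b hab
    by_contra hne
    rcases lt_or_gt_of_ne hne with h | h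
    · exact key a b h hab
    · exact key b a h hab.symm
  · intro k
    refine ⟨g ^ k, ?_⟩
    simp only [SubmonoidClass.coe_pow, Units.val_pow_eq_pow_val]
    rfl

lemma dInf {n : ℕ} (Γ : Subgroup (Matrix.GeneralLinearGroup (Fin n) ℤ))
    (h : Γ) (hne : h ≠ 1) :
    (Set.range fun m : Fin n → ℤ =>
      ((h : Matrix.GeneralLinearGroup (Fin n) ℤ) : Matrix (Fin n) (Fin n) ℤ).mulVec m - m).Infinite := by
  set H : Matrix (Fin n) (Fin n) ℤ :=
    ((h : Matrix.GeneralLinearGroup (Fin n) ℤ) : Matrix (Fin n) (Fin n) ℤ) with hH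
  have hmat : H ≠ 1 := by
    intro he
    apply hne
    have : (h : Matrix.GeneralLinearGroup (Fin n) ℤ) = 1 := Units.ext he
    exact Subtype.ext this
  have hex : ∃ i j, H i j ≠ (1 : Matrix (Fin n) (Fin n) ℤ) i j := by
    by_contra hall
    push_neg at hall
    exact hmat (Matrix.ext fun i j => hall i j)
  obtain ⟨i, j, hij⟩ := hex
  set p : Fin n → ℤ := Pi.single j 1 with hp
  set w : Fin n → ℤ := H.mulVec p - p with hw
  have hwi : w i ≠ 0 := by
    have h1 : H.mulVec p i = H i j := by simp [hp, Matrix.mulVec_single]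
    have h2 : p i = (1 : Matrix (Fin n) (Fin n) ℤ) i j := by
      simp [hp, Matrix.one_apply, Pi.single_apply]
    simp only [hw, Pi.sub_apply, h1, h2, sub_ne_zero]
    exact hij
  apply Set.infinite_of_injective_forall_mem (f := fun k : ℤ => k • w)

  · intro a b hab
    have := congrFun hab i
    simp only [Pi.smul_apply, smul_eq_mul] at this
    exact mul_right_cancel₀ hwi this
  · intro k
    refine ⟨k • p, ?_⟩
    show H *ᵥ (k • p) - k • p = k • w
    rw [Matrix.mulVec_smul, ← smul_sub]

open SemidirectProduct in
lemma iccAux (n : ℕ) (Γ : Subgroup (Matrix.GeneralLinearGroup (Fin n) ℤ))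
    (orbinf : ∀ v : Fin n → ℤ, v ≠ 0 →
        (Set.range fun A : Γ =>
          ((A : Matrix.GeneralLinearGroup (Fin n) ℤ) : Matrix (Fin n) (Fin n) ℤ).mulVec v).Infinite)
    (dinf : ∀ h : Γ, h ≠ 1 →
          (Set.range fun m : Fin n → ℤ =>
            ((h : Matrix.GeneralLinearGroup (Fin n) ℤ) : Matrix (Fin n) (Fin n) ℤ).mulVec m - m).Infinite) :
    IsIcc (Multiplicative (Fin n → ℤ) ⋊[glMulAut n Γ] Γ) := by
  intro x hx1
  by_cases hxr : x.right = 1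
  · have hxl : x.left ≠ 1 := by
      intro hl
      exact hx1 (SemidirectProduct.ext hl hxr)
    set v : Fin n → ℤ := Multiplicative.toAdd x.left with hv
    have hv0 : v ≠ 0 := hxl
    have hx : x = inl x.left := SemidirectProduct.ext rfl (by simp [hxr])
    have horb := (orbinf v hv0).to_subtype
    apply Set.infinite_of_injective_forall_mem
      (f := fun w : (Set.range fun A : Γ =>
          ((A : Matrix.GeneralLinearGroup (Fin n) ℤ) : Matrix (Fin n) (Fin n) ℤ).mulVec v) =>
        (inl (Multiplicative.ofAdd w.1) : Multiplicative (Fin n → ℤ) ⋊[glMulAut n Γ] Γ))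
    · intro a b hab
      have := inl_injective hab
      exact Subtype.ext (by simpa using this)
    · rintro ⟨w, B, hB⟩
      simp only [Set.mem_setOf_eq]
      rw [isConj_iff]
      refine ⟨inr B, ?_⟩
      have hkey : glMulAut n Γ B x.left = Multiplicative.ofAdd w := by
        rw [← hB]
        rfl
      rw [hx, show ((inr B : Multiplicative (Fin n → ℤ) ⋊[glMulAut n Γ] Γ))⁻¹ = inr B⁻¹ from
        (map_inv inr B).symm, ← SemidirectProduct.inl_aut, hkey]
  · set A : Γ := x.right with hA
    have hD := (dinf A hxr).to_subtype
    set v : Fin n → ℤ := Multiplicative.toAdd x.left with hv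
    apply Set.infinite_of_injective_forall_mem
      (f := fun d : (Set.range fun m : Fin n → ℤ =>
            ((A : Matrix.GeneralLinearGroup (Fin n) ℤ) : Matrix (Fin n) (Fin n) ℤ).mulVec m - m) =>
        (⟨Multiplicative.ofAdd (v + d.1), A⟩ : Multiplicative (Fin n → ℤ) ⋊[glMulAut n Γ] Γ))
    · intro a b hab
      simp only [SemidirectProduct.ext_iff] at hab
      apply Subtype.ext
      have h2 : v + a.1 = v + b.1 := by
        have := congrArg Multiplicative.toAdd hab.1
        simpa using this
      exact add_left_cancel h2
    · rintro ⟨d, m, hm⟩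
      simp only [Set.mem_setOf_eq]
      rw [isConj_iff]
      refine ⟨inl (Multiplicative.ofAdd (-m)), ?_⟩
      have hinv : (inl (Multiplicative.ofAdd (-m)) : Multiplicative (Fin n → ℤ) ⋊[glMulAut n Γ] Γ)⁻¹
          = inl (Multiplicative.ofAdd m) := by
        rw [← map_inv, ofAdd_neg, inv_inv]
      rw [hinv]
      refine SemidirectProduct.ext ?_ ?_
      · show Multiplicative.ofAdd (-m) * (glMulAut n Γ (1 : Γ)) x.left *
          (glMulAut n Γ ((1 : Γ) * x.right)) (Multiplicative.ofAdd m) = Multiplicative.ofAdd (v + d)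
        have hmm : (glMulAut n Γ ((1 : Γ) * x.right)) (Multiplicative.ofAdd m)
            = Multiplicative.ofAdd
              (((A : Matrix.GeneralLinearGroup (Fin n) ℤ) : Matrix (Fin n) (Fin n) ℤ).mulVec m) := by
          rw [one_mul]
          rfl
        have h1 : (glMulAut n Γ (1 : Γ)) x.left = x.left := by rw [_root_.map_one]; rfl
        rw [hmm, h1]
        apply Multiplicative.toAdd.injective
        simp only [toAdd_mul, toAdd_ofAdd]
        rw [← hm]
        show -m + v + _ = v +
          (((A : Matrix.GeneralLinearGroup (Fin n) ℤ) : Matrix (Fin n) (Fin n) ℤ).mulVec m - m)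
        abel
      · show (1 : Γ) * x.right * 1 = A
        rw [one_mul, mul_one]

end Helpers

theorem stmt_3 (n : ℕ) (hn : 1 ≤ n) (Γ : Subgroup (Matrix.GeneralLinearGroup (Fin n) ℤ))
    (g : Γ) (hg : g ≠ 1)
    (heig : ∀ z : ℂ,
      (((g : Matrix.GeneralLinearGroup (Fin n) ℤ) : Matrix (Fin n) (Fin n) ℤ).map
          (Int.cast : ℤ → ℂ)).charpoly.IsRoot z → ∀ k : ℕ, 0 < k → z ^ k ≠ 1) :
    (∀ v : Fin n → ℤ, v ≠ 0 →
        (Set.range fun A : Γ =>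
          ((A : Matrix.GeneralLinearGroup (Fin n) ℤ) : Matrix (Fin n) (Fin n) ℤ).mulVec v).Infinite)
      ∧ (∀ h : Γ, h ≠ 1 →
          (Set.range fun m : Fin n → ℤ =>
            ((h : Matrix.GeneralLinearGroup (Fin n) ℤ) : Matrix (Fin n) (Fin n) ℤ).mulVec m - m).Infinite)
      ∧ IsIcc (Multiplicative (Fin n → ℤ) ⋊[glMulAut n Γ] Γ) :=
  ⟨fun v hv => orbitInf Γ g heig v hv, fun h hne => dInf Γ h hne,
    iccAux n Γ (fun v hv => orbitInf Γ g heig v hv) (fun h hne => dInf Γ h hne)⟩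
end

section
/- Let Γ be a countable group, let α : Γ → GL(n,ℝ) be an injective homomorphism such that the diagonal linear action of Γ on ℝⁿ × ℝⁿ, g·(x,y) = (α(g)x, α(g)y), is ergodic with respect to the product of Lebesgue measures (i.e., the linear action of Γ on ℝⁿ is doubly ergodic), and let β be an action of Γ by continuous group automorphisms on a compact second-countable abelian group K that is ergodic with respect to the normalized Haar probability measure on K. Then the diagonal action of Γ on ℝⁿ × K, g·(x,k) = (α(g)x, β_g(k)), is ergodic and essentially free with respect to the product of Lebesgue measure and Haar measure. -/
open MeasureTheory

/-- A (not necessarily measure-preserving) action of `Γ` on a measure space is ergodic if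
every invariant measurable set is null or conull. -/
def IsErgodicAction {Γ X : Type*} [MeasurableSpace X] (μ : Measure X)
    (act : Γ → X → X) : Prop :=
  ∀ E : Set X, MeasurableSet E → (∀ g : Γ, act g '' E = E) → μ E = 0 ∨ μ Eᶜ = 0

/-- A continuous automorphism of a compact group preserves the Haar probability measure. -/
lemma aux_haar_map {K : Type*} [CommGroup K] [TopologicalSpace K] [IsTopologicalGroup K]
    [CompactSpace K] [SecondCountableTopology K] [MeasurableSpace K] [BorelSpace K]
    (μK : Measure K) [IsProbabilityMeasure μK] [μK.IsHaarMeasure]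
    (e : K ≃* K) (he : Continuous e) : μK.map e = μK := by
  have h1 : Measure.IsHaarMeasure (μK.map ⇑e) := by
    have := Measure.isHaarMeasure_map_of_isFiniteMeasure μK (e : K →* K) he e.surjective
    simpa using this
  have h2 : IsProbabilityMeasure (μK.map ⇑e) :=
    Measure.isProbabilityMeasure_map he.measurable.aemeasurable
  exact Measure.isHaarMeasure_eq_of_isProbabilityMeasure _ _

lemma aux_union_symmDiff {X : Type*} {a b N : Set X} (h : symmDiff a b ⊆ N) :
    a ∪ N = b ∪ N := by
  ext x
  constructor
  · rintro (hx | hx)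
    · by_cases hb : x ∈ b
      · exact Or.inl hb
      · exact Or.inr (h (by simp [Set.mem_symmDiff, hx, hb]))
    · exact Or.inr hx
  · rintro (hx | hx)
    · by_cases ha : x ∈ a
      · exact Or.inl ha
      · exact Or.inr (h (by simp [Set.mem_symmDiff, hx, ha]))
    · exact Or.inr hx

theorem stmt_10 (n : ℕ) {Γ K : Type*} [Group Γ] [Countable Γ]
    [CommGroup K] [TopologicalSpace K] [IsTopologicalGroup K] [CompactSpace K]
    [SecondCountableTopology K] [MeasurableSpace K] [BorelSpace K]
    (α : Γ →* Matrix.GeneralLinearGroup (Fin n) ℝ) (hα : Function.Injective α)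
    (hdbl : IsErgodicAction
      ((volume : Measure (Fin n → ℝ)).prod (volume : Measure (Fin n → ℝ)))
      (fun (g : Γ) (p : (Fin n → ℝ) × (Fin n → ℝ)) =>
        (((α g : Matrix.GeneralLinearGroup (Fin n) ℝ) : Matrix (Fin n) (Fin n) ℝ).mulVec p.1,
         ((α g : Matrix.GeneralLinearGroup (Fin n) ℝ) : Matrix (Fin n) (Fin n) ℝ).mulVec p.2)))
    (β : Γ →* (K ≃* K)) (hβcont : ∀ g : Γ, Continuous (β g))
    (μK : Measure K) [IsProbabilityMeasure μK] [μK.IsHaarMeasure]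
    (hβerg : IsErgodicAction μK (fun (g : Γ) (k : K) => β g k)) :
    IsErgodicAction ((volume : Measure (Fin n → ℝ)).prod μK)
        (fun (g : Γ) (p : (Fin n → ℝ) × K) =>
          (((α g : Matrix.GeneralLinearGroup (Fin n) ℝ) : Matrix (Fin n) (Fin n) ℝ).mulVec p.1,
           β g p.2))
      ∧ ∀ g : Γ, g ≠ 1 →
          ((volume : Measure (Fin n → ℝ)).prod μK)
            {p : (Fin n → ℝ) × K |
              ((α g : Matrix.GeneralLinearGroup (Fin n) ℝ) : Matrix (Fin n) (Fin n) ℝ).mulVec p.1 = p.1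
                ∧ β g p.2 = p.2} = 0 := by
  -- notation
  set M : Γ → Matrix (Fin n) (Fin n) ℝ :=
    fun g => ((α g : Matrix.GeneralLinearGroup (Fin n) ℝ) : Matrix (Fin n) (Fin n) ℝ) with hM
  have hMmul : ∀ g h : Γ, M g * M h = M (g * h) := by
    intro g h
    simp only [hM, ← Units.val_mul, ← map_mul]
  have hMone : M 1 = 1 := by simp [hM]
  have hMinv : ∀ (g : Γ) (x : Fin n → ℝ), (M g⁻¹).mulVec ((M g).mulVec x) = x := by
    intro g x
    rw [Matrix.mulVec_mulVec, hMmul, inv_mul_cancel, hMone, Matrix.one_mulVec]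
  have hMunit : ∀ g : Γ, IsUnit (M g) := fun g => (α g).isUnit
  -- null preimages under the linear maps
  have hMpre_null : ∀ (g : Γ) (s : Set (Fin n → ℝ)), volume s = 0 →
      volume ((M g).mulVec ⁻¹' s) = 0 := by
    intro g s hs
    have hdet : (M g).det ≠ 0 := by
      have := (hMunit g).map (Matrix.detMonoidHom (n := Fin n) (R := ℝ))
      simpa [isUnit_iff_ne_zero] using this
    have hdet' : LinearMap.det (M g).mulVecLin ≠ 0 := by
      have h : Matrix.toLin' (M g) = (M g).mulVecLin := rfl
      rw [← h, LinearMap.det_toLin']; exact hdet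
    have h2 : ((M g).mulVec ⁻¹' s) = ((M g).mulVecLin ⁻¹' s) := rfl
    rw [h2, Measure.addHaar_preimage_linearMap (volume : Measure (Fin n → ℝ)) hdet' s, hs,
      mul_zero]
  have hvol_ne : (volume : Measure (Fin n → ℝ)) Set.univ ≠ 0 :=
    isOpen_univ.measure_ne_zero volume ⟨0, trivial⟩
  -- facts about β
  have hβmeas : ∀ g : Γ, Measurable (β g) := fun g => (hβcont g).measurable
  have hβgg : ∀ (g : Γ) (k : K), β g⁻¹ (β g k) = k := by
    intro g k
    have h : (β g⁻¹) * (β g) = 1 := by rw [← map_mul, inv_mul_cancel, map_one]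
    have h2 : (β g⁻¹) ((β g) k) = ((β g⁻¹) * (β g)) k := rfl
    rw [h2, h]; rfl
  have hβgg' : ∀ (g : Γ) (k : K), β g (β g⁻¹ k) = k := by
    intro g k; simpa using hβgg g⁻¹ k
  have himg : ∀ (g : Γ) (S : Set K), ⇑(β g) '' S = ⇑(β g⁻¹) ⁻¹' S := by
    intro g S
    ext k
    constructor
    · rintro ⟨m, hm, rfl⟩
      simpa [Set.mem_preimage, hβgg] using hm
    · intro h
      exact ⟨β g⁻¹ k, h, hβgg' g k⟩
  have hmapβ : ∀ g : Γ, μK.map (β g) = μK := fun g => aux_haar_map μK (β g) (hβcont g)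
  have hpre_meas : ∀ (g : Γ) (S : Set K), MeasurableSet S → μK (⇑(β g) ⁻¹' S) = μK S := by
    intro g S hS
    rw [← Measure.map_apply (hβmeas g) hS, hmapβ]
  have hpre_null : ∀ (g : Γ) (S : Set K), μK S = 0 → μK (⇑(β g) ⁻¹' S) = 0 := by
    intro g S hS
    obtain ⟨T, hST, hTm, hT0⟩ := exists_measurable_superset_of_null hS
    exact measure_mono_null (Set.preimage_mono hST) ((hpre_meas g T hTm).trans hT0)
  have himg_null : ∀ (g : Γ) (S : Set K), μK S = 0 → μK (⇑(β g) '' S) = 0 := by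
    intro g S hS
    rw [himg]; exact hpre_null g⁻¹ S hS
  constructor
  · -- Ergodicity of the product action
    intro E hE hinv
    -- sections
    set sec : (Fin n → ℝ) → Set K := fun x => Prod.mk x ⁻¹' E with hsec
    have hsec_meas : ∀ x, MeasurableSet (sec x) := fun x => hE.preimage measurable_prodMk_left
    -- exact invariance pointwise
    have hiff : ∀ (g : Γ) (x : Fin n → ℝ) (k : K),
        (x, k) ∈ E ↔ ((M g).mulVec x, β g k) ∈ E := by
      intro g x k
      constructor
      · intro h
        rw [← hinv g]
        exact ⟨(x, k), h, rfl⟩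
      · intro h
        have h2 : ((M g⁻¹).mulVec ((M g).mulVec x), β g⁻¹ (β g k)) ∈ E := by
          rw [← hinv g⁻¹]
          exact ⟨((M g).mulVec x, β g k), h, rfl⟩
        rwa [hMinv, hβgg] at h2
    have hsec_g : ∀ (g : Γ) (x : Fin n → ℝ), sec ((M g).mulVec x) = ⇑(β g) '' (sec x) := by
      intro g x
      ext k
      rw [himg g]
      constructor
      · intro h
        have : (x, β g⁻¹ k) ∈ E := by
          rw [hiff g, hβgg']
          exact h
        exact this
      · intro h
        have h2 : ((M g).mulVec x, β g (β g⁻¹ k)) ∈ E := (hiff g x (β g⁻¹ k)).1 h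
        rwa [hβgg'] at h2
    -- the symmetric-difference function D on (Fin n → ℝ) × (Fin n → ℝ)
    set SD : Set (((Fin n → ℝ) × (Fin n → ℝ)) × K) :=
      symmDiff ((fun q => (q.1.1, q.2)) ⁻¹' E) ((fun q => (q.1.2, q.2)) ⁻¹' E) with hSD
    have hSDm : MeasurableSet SD := by
      have h1 : MeasurableSet ((fun q : ((Fin n → ℝ) × (Fin n → ℝ)) × K => (q.1.1, q.2)) ⁻¹' E) :=
        hE.preimage ((measurable_fst.fst).prodMk measurable_snd)
      have h2 : MeasurableSet ((fun q : ((Fin n → ℝ) × (Fin n → ℝ)) × K => (q.1.2, q.2)) ⁻¹' E) :=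
        hE.preimage ((measurable_fst.snd).prodMk measurable_snd)
      exact h1.symmDiff h2
    set D : (Fin n → ℝ) × (Fin n → ℝ) → ENNReal := fun p => μK (Prod.mk p ⁻¹' SD) with hD
    have hDsec : ∀ p : (Fin n → ℝ) × (Fin n → ℝ),
        Prod.mk p ⁻¹' SD = symmDiff (sec p.1) (sec p.2) := by
      intro p
      ext k
      simp [hSD, hsec, Set.mem_symmDiff]
    have hDmeas : Measurable D := measurable_measure_prodMk_left hSDm
    have hDval : ∀ p : (Fin n → ℝ) × (Fin n → ℝ), D p = μK (symmDiff (sec p.1) (sec p.2)) := by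
      intro p
      show μK (Prod.mk p ⁻¹' SD) = _
      rw [hDsec]
    -- D is invariant under the diagonal action
    have hDinv : ∀ (g : Γ) (p : (Fin n → ℝ) × (Fin n → ℝ)),
        D ((M g).mulVec p.1, (M g).mulVec p.2) = D p := by
      intro g p
      rw [hDval, hDval]
      simp only
      rw [hsec_g g p.1, hsec_g g p.2, ← Set.image_symmDiff (β g).injective]
      rw [himg]
      exact hpre_meas g⁻¹ _ ((hsec_meas p.1).symmDiff (hsec_meas p.2))
    -- sublevel sets are invariant, hence null or conull
    have hsub : ∀ c : ENNReal,
        ((volume : Measure (Fin n → ℝ)).prod (volume : Measure (Fin n → ℝ)))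
          {p | D p ≤ c} = 0 ∨
        ((volume : Measure (Fin n → ℝ)).prod (volume : Measure (Fin n → ℝ)))
          {p | D p ≤ c}ᶜ = 0 := by
      intro c
      apply hdbl _ (hDmeas measurableSet_Iic)
      intro g
      ext p
      constructor
      · rintro ⟨q, hq, rfl⟩
        show D ((M g).mulVec q.1, (M g).mulVec q.2) ≤ c
        rw [hDinv g q]; exact hq
      · intro hp
        refine ⟨((M g⁻¹).mulVec p.1, (M g⁻¹).mulVec p.2), ?_, ?_⟩
        · have := hDinv g ((M g⁻¹).mulVec p.1, (M g⁻¹).mulVec p.2)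
          simp only [hMinv] at this ⊢
          have h3 : ((M g).mulVec ((M g⁻¹).mulVec p.1), (M g).mulVec ((M g⁻¹).mulVec p.2)) = p := by
            rw [Matrix.mulVec_mulVec, Matrix.mulVec_mulVec, hMmul, mul_inv_cancel, hMone,
              Matrix.one_mulVec, Matrix.one_mulVec]
          rw [h3] at this
          simpa [this] using hp
        · simp only
          rw [Matrix.mulVec_mulVec, Matrix.mulVec_mulVec, hMmul, mul_inv_cancel, hMone,
            Matrix.one_mulVec, Matrix.one_mulVec]
    -- the key claim: D = 0 a.e.
    have hD0 : ((volume : Measure (Fin n → ℝ)).prod (volume : Measure (Fin n → ℝ)))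
        {p | D p ≠ 0} = 0 := by
      by_contra hcon
      -- find a threshold c
      have hcover : {p | D p ≠ 0} ⊆ ⋃ m : ℕ, {p | ((m : ENNReal))⁻¹ < D p} := by
        intro p hp
        obtain ⟨m, hm⟩ := ENNReal.exists_inv_nat_lt hp
        exact Set.mem_iUnion.2 ⟨m, hm⟩
      have hex : ∃ m : ℕ, ((volume : Measure (Fin n → ℝ)).prod (volume : Measure (Fin n → ℝ)))
          {p | ((m : ENNReal))⁻¹ < D p} ≠ 0 := by
        by_contra hall
        push_neg at hall
        exact hcon (measure_mono_null hcover (measure_iUnion_null hall))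
      obtain ⟨m, hm⟩ := hex
      set c : ENNReal := min ((m : ENNReal))⁻¹ 1 with hc
      have hc0 : c ≠ 0 := by
        simp only [hc, ne_eq, min_eq_iff]
        intro h
        rcases h with ⟨h1, -⟩ | ⟨h1, -⟩
        · exact (ENNReal.inv_ne_zero.2 (ENNReal.natCast_ne_top m)) h1
        · exact one_ne_zero h1
      have hctop : c ≠ ⊤ := ne_top_of_le_ne_top ENNReal.one_ne_top (min_le_right _ _)
      have hcpos : ((volume : Measure (Fin n → ℝ)).prod (volume : Measure (Fin n → ℝ)))
          {p | c < D p} ≠ 0 := by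
        intro h
        apply hm
        apply measure_mono_null _ h
        intro p hp
        simp only [Set.mem_setOf_eq] at hp ⊢
        exact lt_of_le_of_lt (min_le_left _ _) hp
      -- so {D ≤ c} is null
      have hEcnull : ((volume : Measure (Fin n → ℝ)).prod (volume : Measure (Fin n → ℝ)))
          {p | D p ≤ c} = 0 := by
        rcases hsub c with h | h
        · exact h
        · exfalso
          apply hcpos
          have : {p | c < D p} = {p | D p ≤ c}ᶜ := by
            ext p; simp [not_le]
          rw [this]; exact h
      -- countable measure-dense family
      have hsep := MeasureTheory.isSeparable_of_sigmaFinite (μ := μK)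
      obtain ⟨𝒜, h𝒜count, h𝒜dense⟩ := MeasureTheory.exists_countable_measureDense (μ := μK)
      -- radius c/2
      set r : ENNReal := c / 2 with hr
      have hrtop : r ≠ ⊤ := by
        simp [hr, ENNReal.div_eq_top, hctop]
      have hr0 : r ≠ 0 := by
        simp only [hr, ne_eq, ENNReal.div_eq_zero_iff]
        push_neg
        exact ⟨hc0, ENNReal.ofNat_ne_top⟩
      -- the covering sets
      set XS : Set K → Set (Fin n → ℝ) := fun S => {x | μK (symmDiff (sec x) S) < r} with hXS
      have hXSmeas : ∀ S : Set K, MeasurableSet S → MeasurableSet (XS S) := by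
        intro S hS
        have hset : MeasurableSet (symmDiff E (Set.univ ×ˢ S)) :=
          hE.symmDiff (MeasurableSet.univ.prod hS)
        have hf : Measurable fun x => μK (Prod.mk x ⁻¹' (symmDiff E (Set.univ ×ˢ S))) :=
          measurable_measure_prodMk_left hset
        have heq : ∀ x, Prod.mk x ⁻¹' (symmDiff E (Set.univ ×ˢ S)) = symmDiff (sec x) S := by
          intro x
          ext k
          simp [Set.mem_symmDiff, hsec]
        have : XS S = (fun x => μK (Prod.mk x ⁻¹' (symmDiff E (Set.univ ×ˢ S)))) ⁻¹' (Set.Iio r) := by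
          ext x
          simp [hXS, heq x]
          exact Iff.rfl
        rw [this]
        exact hf measurableSet_Iio
      -- the XS cover everything
      have hXScover : ∀ x : Fin n → ℝ, ∃ S ∈ 𝒜, x ∈ XS S := by
        intro x
        have hfin : μK (sec x) ≠ ⊤ := measure_ne_top μK _
        have hrr : 0 < r.toReal := ENNReal.toReal_pos hr0 hrtop
        obtain ⟨t, ht𝒜, hts⟩ := h𝒜dense.approx (sec x) (hsec_meas x) hfin r.toReal hrr
        refine ⟨t, ht𝒜, ?_⟩
        rw [hXS]
        simp only [Set.mem_setOf_eq]
        rwa [ENNReal.ofReal_toReal hrtop] at hts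
      -- each XS S is null
      have hXSnull : ∀ S ∈ 𝒜, volume (XS S) = 0 := by
        intro S hS𝒜
        have hsq : (XS S) ×ˢ (XS S) ⊆ {p | D p ≤ c} := by
          rintro ⟨x, y⟩ ⟨hx, hy⟩
          simp only [Set.mem_setOf_eq]
          rw [hDval]
          calc μK (symmDiff (sec x) (sec y))
              ≤ μK (symmDiff (sec x) S) + μK (symmDiff S (sec y)) := measure_symmDiff_le _ _ _
            _ ≤ r + r := by
                refine add_le_add (le_of_lt hx) ?_
                rw [symmDiff_comm]
                exact le_of_lt hy
            _ = c := by rw [hr, ENNReal.add_halves]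
        have := measure_mono_null hsq hEcnull
        rw [Measure.prod_prod] at this
        exact or_self_iff.1 (mul_eq_zero.1 this)
      -- contradiction: the whole space is null
      have huniv : (volume : Measure (Fin n → ℝ)) Set.univ = 0 := by
        apply measure_mono_null (t := ⋃ S ∈ 𝒜, XS S)
        · intro x _
          obtain ⟨S, hS, hxS⟩ := hXScover x
          exact Set.mem_biUnion hS hxS
        · exact (measure_biUnion_null_iff h𝒜count).2 hXSnull
      exact hvol_ne huniv
    -- extract a good point x₀
    have hDm2 : MeasurableSet {p : (Fin n → ℝ) × (Fin n → ℝ) | D p ≠ 0} := by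
      have : {p : (Fin n → ℝ) × (Fin n → ℝ) | D p ≠ 0} = (D ⁻¹' {0})ᶜ := by
        ext p; simp
      rw [this]
      exact (hDmeas (measurableSet_singleton 0)).compl
    rw [Measure.measure_prod_null hDm2] at hD0
    have hne : (volume : Measure (Fin n → ℝ)) ≠ 0 := by
      intro h
      exact hvol_ne (by rw [h]; rfl)
    have : (ae (volume : Measure (Fin n → ℝ))).NeBot := ae_neBot.2 hne
    obtain ⟨x₀, hx₀⟩ := hD0.exists
    set B : Set K := sec x₀ with hB
    have hBm : MeasurableSet B := hsec_meas x₀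
    -- for a.e. y, the section at y agrees with B
    have hBy : ∀ᵐ y ∂(volume : Measure (Fin n → ℝ)), μK (symmDiff B (sec y)) = 0 := by
      have h1 : {y | D (x₀, y) ≠ 0} = Prod.mk x₀ ⁻¹' {p : (Fin n → ℝ) × (Fin n → ℝ) | D p ≠ 0} := rfl
      have h2 : (volume : Measure (Fin n → ℝ)) {y | D (x₀, y) ≠ 0} = 0 := by rw [h1]; exact hx₀
      have h3 : {y | μK (symmDiff B (sec y)) ≠ 0} ⊆ {y | D (x₀, y) ≠ 0} := by
        intro y hy
        simp only [Set.mem_setOf_eq] at hy ⊢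
        rwa [hDval]
      exact measure_mono_null h3 h2
    -- B is almost invariant under each β g
    have hBg : ∀ g : Γ, μK (symmDiff (⇑(β g) '' B) B) = 0 := by
      intro g
      set Z : Set (Fin n → ℝ) := {y | μK (symmDiff B (sec y)) ≠ 0} with hZ
      have hZ0 : volume Z = 0 := hBy
      have hZg0 : volume ((M g).mulVec ⁻¹' Z) = 0 := hMpre_null g Z hZ0
      have hcompl : volume (Z ∪ (M g).mulVec ⁻¹' Z) = 0 :=
        measure_union_null hZ0 hZg0
      have hex : ∃ y, y ∉ Z ∪ (M g).mulVec ⁻¹' Z := by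
        by_contra hall
        push_neg at hall
        have : (Set.univ : Set (Fin n → ℝ)) ⊆ Z ∪ (M g).mulVec ⁻¹' Z := fun y _ => hall y
        exact hvol_ne (measure_mono_null this hcompl)
      obtain ⟨y, hy⟩ := hex
      rw [Set.mem_union, not_or] at hy
      obtain ⟨hy1, hy2⟩ := hy
      simp only [hZ, Set.mem_setOf_eq, not_not, Set.mem_preimage] at hy1 hy2
      -- hy1 : μK (symmDiff B (sec y)) = 0 ; hy2 : μK (symmDiff B (sec ((M g).mulVec y))) = 0
      have hgy : sec ((M g).mulVec y) = ⇑(β g) '' (sec y) := hsec_g g y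
      apply le_antisymm _ zero_le
      calc μK (symmDiff (⇑(β g) '' B) B)
          ≤ μK (symmDiff (⇑(β g) '' B) (⇑(β g) '' (sec y))) + μK (symmDiff (⇑(β g) '' (sec y)) B) :=
            measure_symmDiff_le _ _ _
        _ = 0 := by
            have e1 : μK (symmDiff (⇑(β g) '' B) (⇑(β g) '' (sec y))) = 0 := by
              rw [← Set.image_symmDiff (β g).injective]
              exact himg_null g _ hy1
            have e2 : μK (symmDiff (⇑(β g) '' (sec y)) B) = 0 := by
              rw [← hgy, symmDiff_comm]
              exact hy2
            rw [e1, e2, add_zero]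
    -- patch B to an exactly invariant set
    set N : Set K := ⋃ g : Γ, symmDiff (⇑(β g) '' B) B with hN
    have hN0 : μK N = 0 := measure_iUnion_null hBg
    set N' : Set K := ⋃ h : Γ, ⇑(β h) ⁻¹' N with hN'
    have hN'0 : μK N' = 0 := measure_iUnion_null (fun h => hpre_null h N hN0)
    have hNsubN' : N ⊆ N' := by
      intro k hk
      apply Set.mem_iUnion.2 ⟨(1 : Γ), ?_⟩
      simpa [map_one] using hk
    have hNm : MeasurableSet N := by
      apply MeasurableSet.iUnion
      intro g
      have himB : MeasurableSet (⇑(β g) '' B) := by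
        rw [himg]
        exact hBm.preimage (hβmeas g⁻¹)
      exact himB.symmDiff hBm
    have hN'm : MeasurableSet N' :=
      MeasurableSet.iUnion fun h => hNm.preimage (hβmeas h)
    -- N' is exactly invariant
    have hβN' : ∀ g : Γ, ⇑(β g) ⁻¹' N' = N' := by
      intro g
      rw [hN', Set.preimage_iUnion]
      have hterm : ∀ h : Γ, ⇑(β g) ⁻¹' (⇑(β h) ⁻¹' N) = ⇑(β (h * g)) ⁻¹' N := by
        intro h
        have hfun : ⇑(β h) ∘ ⇑(β g) = ⇑(β (h * g)) := by
          funext k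
          show β h (β g k) = β (h * g) k
          rw [map_mul]
          rfl
        rw [← Set.preimage_comp, hfun]
      calc (⋃ h : Γ, ⇑(β g) ⁻¹' (⇑(β h) ⁻¹' N))
          = ⋃ h : Γ, ⇑(β (h * g)) ⁻¹' N := by
            exact Set.iUnion_congr hterm
        _ = ⋃ h : Γ, ⇑(β h) ⁻¹' N := by
            exact Function.Surjective.iUnion_comp (fun h => ⟨h * g⁻¹, by group⟩)
              (fun h => ⇑(β h) ⁻¹' N)
    have hβN'img : ∀ g : Γ, ⇑(β g) '' N' = N' := by
      intro g
      rw [himg, hβN']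
    -- B ∪ N' is exactly invariant
    have hβB' : ∀ g : Γ, ⇑(β g) '' (B ∪ N') = B ∪ N' := by
      intro g
      rw [Set.image_union, hβN'img]
      have hsd : symmDiff (⇑(β g) '' B) B ⊆ N' :=
        subset_trans (Set.subset_iUnion (fun g : Γ => symmDiff (⇑(β g) '' B) B) g) hNsubN'
      exact aux_union_symmDiff hsd
    -- apply ergodicity of β
    rcases hβerg (B ∪ N') (hBm.union hN'm) hβB' with hc1 | hc2
    · -- B is null, hence E is null
      left
      have hB0 : μK B = 0 := measure_mono_null Set.subset_union_left hc1
      rw [Measure.prod_apply hE]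
      have hae : ∀ᵐ x ∂(volume : Measure (Fin n → ℝ)), μK (Prod.mk x ⁻¹' E) = 0 := by
        filter_upwards [hBy] with x hx
        have hsub2 : sec x ⊆ B ∪ symmDiff B (sec x) := by
          intro k hk
          by_cases hkB : k ∈ B
          · exact Or.inl hkB
          · exact Or.inr (by simp [Set.mem_symmDiff, hk, hkB])
        exact measure_mono_null hsub2 (measure_union_null hB0 hx)
      calc ∫⁻ x, μK (Prod.mk x ⁻¹' E) ∂(volume : Measure (Fin n → ℝ))
          = ∫⁻ _, 0 ∂(volume : Measure (Fin n → ℝ)) := lintegral_congr_ae hae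
        _ = 0 := lintegral_zero
    · -- B is conull, hence E is conull
      right
      have hBc0 : μK Bᶜ = 0 := by
        have hsub2 : Bᶜ ⊆ (B ∪ N')ᶜ ∪ N' := by
          intro k hk
          by_cases hkN : k ∈ N'
          · exact Or.inr hkN
          · exact Or.inl (by simp only [Set.mem_compl_iff, Set.mem_union, not_or]; exact ⟨hk, hkN⟩)
        exact measure_mono_null hsub2 (measure_union_null hc2 hN'0)
      rw [Measure.prod_apply hE.compl]
      have hae : ∀ᵐ x ∂(volume : Measure (Fin n → ℝ)), μK (Prod.mk x ⁻¹' Eᶜ) = 0 := by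
        filter_upwards [hBy] with x hx
        have hkey : Prod.mk x ⁻¹' Eᶜ = (sec x)ᶜ := rfl
        rw [hkey]
        have hsub2 : (sec x)ᶜ ⊆ Bᶜ ∪ symmDiff B (sec x) := by
          intro k hk
          by_cases hkB : k ∈ B
          · exact Or.inr (by simp only [Set.mem_symmDiff]; exact Or.inl ⟨hkB, hk⟩)
          · exact Or.inl hkB
        exact measure_mono_null hsub2 (measure_union_null hBc0 hx)
      calc ∫⁻ x, μK (Prod.mk x ⁻¹' Eᶜ) ∂(volume : Measure (Fin n → ℝ))
          = ∫⁻ _, 0 ∂(volume : Measure (Fin n → ℝ)) := lintegral_congr_ae hae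
        _ = 0 := lintegral_zero
  · -- Essential freeness
    intro g hg
    have hA1 : M g ≠ 1 := by
      intro h
      apply hg
      apply hα
      rw [map_one]
      apply Units.ext
      simpa [hM] using h
    have hker : LinearMap.ker (M g - 1).mulVecLin ≠ ⊤ := by
      intro h
      apply hA1
      have hzero : (M g - 1).mulVecLin = 0 := LinearMap.ker_eq_top.1 h
      have hsub : M g - 1 = 0 := by
        ext i j
        have h2 : (M g - 1).mulVecLin (Pi.single j 1) = 0 := by rw [hzero]; rfl
        rw [Matrix.mulVecLin_apply, Matrix.mulVec_single_one] at h2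
        have h3 := congrFun h2 i
        simpa [Matrix.transpose_apply] using h3
      rw [sub_eq_zero] at hsub
      exact hsub
    have hsubset : {p : (Fin n → ℝ) × K | (M g).mulVec p.1 = p.1 ∧ β g p.2 = p.2} ⊆
        (↑(LinearMap.ker (M g - 1).mulVecLin) : Set (Fin n → ℝ)) ×ˢ (Set.univ : Set K) := by
      rintro ⟨x, k⟩ ⟨h1, -⟩
      refine ⟨?_, trivial⟩
      show x ∈ LinearMap.ker (M g - 1).mulVecLin
      rw [LinearMap.mem_ker, Matrix.mulVecLin_apply, Matrix.sub_mulVec, Matrix.one_mulVec,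
        sub_eq_zero]
      exact h1
    apply measure_mono_null hsubset
    rw [Measure.prod_prod,
      Measure.addHaar_submodule (volume : Measure (Fin n → ℝ)) _ hker, zero_mul]
end

section
/- Let n ≥ 2 and let Γ be a countable dense subgroup of SL(n,ℝ). Then the linear action of Γ on ℝⁿ is ergodic with respect to Lebesgue measure: every Lebesgue-measurable subset S ⊆ ℝⁿ with A·S = S for all A ∈ Γ is either Lebesgue-null or its complement is Lebesgue-null. -/
open MeasureTheory Matrix Filter Metric
open scoped Topology

private lemma stmt12_lemA (n : ℕ) (hn : 2 ≤ n) [NeZero n] (x : Fin n → ℝ) (hx : x 0 ≠ 0) :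
    ∃ M : Matrix (Fin n) (Fin n) ℝ, M.det = 1 ∧ M.mulVec (Pi.single 0 1) = x := by
  have hone : ((⟨1, hn⟩ : Fin n) : Fin n) ≠ 0 := by
    simp [Fin.ext_iff]
  set one : Fin n := ⟨1, hn⟩ with honedef
  set M : Matrix (Fin n) (Fin n) ℝ := Matrix.of (fun k j =>
    if j = 0 then x k else if k = j then (if k = one then (x 0)⁻¹ else 1) else 0) with hM
  refine ⟨M, ?_, ?_⟩
  · have htri : M.BlockTriangular OrderDual.toDual := by
      intro i j hij
      have hij' : i < j := hij
      have hj0 : j ≠ 0 := by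
        rintro rfl; exact absurd hij' (by simp [Fin.lt_def])
      have hkj : i ≠ j := ne_of_lt hij'
      simp [hM, hj0, hkj]
    rw [Matrix.det_of_lowerTriangular M htri]
    have hdiag : ∀ i : Fin n, M i i = (if i = 0 then x 0 else 1) * (if i = one then (x 0)⁻¹ else 1) := by
      intro i
      by_cases h : i = 0
      · subst h; simp [hM, (Ne.symm hone : (0:Fin n) ≠ one)]
      · simp [hM, h]
    rw [Finset.prod_congr rfl (fun i _ => hdiag i), Finset.prod_mul_distrib,
      Finset.prod_ite_eq' Finset.univ (0 : Fin n) (fun _ => x 0),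
      Finset.prod_ite_eq' Finset.univ one (fun _ => (x 0)⁻¹)]
    simp [inv_mul_cancel₀ hx, mul_inv_cancel₀ hx]
  · ext k
    simp [hM]

private lemma stmt12_lemB (n : ℕ) (hn : 2 ≤ n) [NeZero n] (x : Fin n → ℝ) (hx : x ≠ 0) :
    ∃ M : Matrix (Fin n) (Fin n) ℝ, M.det = 1 ∧ M.mulVec (Pi.single 0 1) = x := by
  obtain ⟨i, hi⟩ : ∃ i, x i ≠ 0 := by
    by_contra h; push_neg at h; exact hx (funext h)
  by_cases h0 : x 0 ≠ 0
  · exact stmt12_lemA n hn x h0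
  push_neg at h0
  have hi0 : i ≠ 0 := by rintro rfl; exact hi h0
  set T : Matrix (Fin n) (Fin n) ℝ := Matrix.transvection 0 i 1 with hT
  set x' : Fin n → ℝ := T.mulVec x with hx'
  have hx'v : x' = fun k => x k + (if k = 0 then x i else 0) := by
    ext k
    simp [hx', hT, Matrix.transvection, Matrix.add_mulVec, Matrix.single_mulVec,
      Function.update, Matrix.one_mulVec]
  have hx'0 : x' 0 ≠ 0 := by
    rw [hx'v]; simp [h0, hi]
  obtain ⟨M', hM'det, hM'⟩ := stmt12_lemA n hn x' hx'0
  refine ⟨Matrix.transvection 0 i (-1) * M', ?_, ?_⟩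
  · rw [Matrix.det_mul, Matrix.det_transvection_of_ne _ _ (Ne.symm hi0), hM'det, one_mul]
  · rw [← Matrix.mulVec_mulVec, hM', hx', Matrix.mulVec_mulVec, hT,
      Matrix.transvection_mul_transvection_same _ _ (Ne.symm hi0), neg_add_cancel,
      Matrix.transvection_zero, Matrix.one_mulVec]

private lemma stmt12_lemC (n : ℕ) (hn : 2 ≤ n) [NeZero n] (x y : Fin n → ℝ)
    (hx : x ≠ 0) (hy : y ≠ 0) :
    ∃ M : Matrix (Fin n) (Fin n) ℝ, M.det = 1 ∧ M.mulVec x = y := by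
  obtain ⟨Mx, hMxd, hMx⟩ := stmt12_lemB n hn x hx
  obtain ⟨My, hMyd, hMy⟩ := stmt12_lemB n hn y hy
  have hunit : IsUnit Mx.det := by rw [hMxd]; exact isUnit_one
  refine ⟨My * Mx⁻¹, ?_, ?_⟩
  · rw [Matrix.det_mul, hMyd, Matrix.det_nonsing_inv, hMxd, one_mul]; simp
  · rw [← hMx, Matrix.mulVec_mulVec, mul_assoc,
      Matrix.nonsing_inv_mul _ hunit, mul_one, hMy]

/-- `M ↦ mulVec M` as a bundled linear map into continuous linear maps. -/
noncomputable def stmt12FF (n : ℕ) :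
    Matrix (Fin n) (Fin n) ℝ →ₗ[ℝ] ((Fin n → ℝ) →L[ℝ] (Fin n → ℝ)) where
  toFun M := LinearMap.toContinuousLinearMap (Matrix.mulVecLin M)
  map_add' M N := by ext v; simp [Matrix.add_mulVec]
  map_smul' c M := by ext v; simp [Matrix.smul_mulVec]

private lemma stmt12FF_apply (n : ℕ) (M : Matrix (Fin n) (Fin n) ℝ) (v : Fin n → ℝ) :
    stmt12FF n M v = M.mulVec v := rfl

private lemma stmt12FF_cont (n : ℕ) : Continuous (stmt12FF n) :=
  LinearMap.continuous_of_finiteDimensional _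

private lemma stmt12_meas_pres (n : ℕ) (M : Matrix (Fin n) (Fin n) ℝ) (hM : M.det = 1)
    (T : Set (Fin n → ℝ)) (hT : MeasurableSet T) :
    volume ((fun v => M.mulVec v) ⁻¹' T) = volume T := by
  have hco : (fun v => M.mulVec v) = ⇑(Matrix.toLin' M) := by
    funext v; rw [Matrix.toLin'_apply]
  have hcont : Continuous fun v => M.mulVec v := by
    rw [hco]; exact LinearMap.continuous_of_finiteDimensional _
  rw [← Measure.map_apply hcont.measurable hT, hco,
    Real.map_matrix_volume_pi_eq_smul_volume_pi (by rw [hM]; exact one_ne_zero)]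
  simp [hM]

private lemma stmt12_density_pt (n : ℕ) [NeZero n] (S T : Set (Fin n → ℝ))
    (hS : MeasurableSet S) (hT : volume T ≠ 0) :
    ∃ x, x ∈ T ∧ x ≠ 0 ∧ Tendsto
      (fun r => volume (S ∩ closedBall x r) / volume (closedBall x r)) (𝓝[>] 0)
      (𝓝 (S.indicator 1 x)) := by
  have h0 : volume ({(0 : Fin n → ℝ)} : Set (Fin n → ℝ)) = 0 := by
    have hsub : ({(0 : Fin n → ℝ)} : Set (Fin n → ℝ)) ⊆ closedBall 0 0 := by simp
    refine le_antisymm (le_trans (measure_mono hsub) ?_) zero_le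
    rw [Real.volume_pi_closedBall (0 : Fin n → ℝ) le_rfl]
    simp [Fintype.card_fin, pow_eq_zero_iff, NeZero.ne n]
  have hae := Besicovitch.ae_tendsto_measure_inter_div_of_measurableSet
    (volume : Measure (Fin n → ℝ)) hS
  have h0ae : ∀ᵐ z : Fin n → ℝ, z ≠ 0 := by
    rw [ae_iff]; convert h0 using 2; ext z; simp
  obtain ⟨x, hxT, hx1, hx2⟩ :=
    Measure.exists_mem_of_measure_ne_zero_of_ae hT (ae_restrict_of_ae (hae.and h0ae))
  exact ⟨x, hxT, hx2, hx1⟩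

theorem stmt_12 (n : ℕ) (hn : 2 ≤ n) (Γ : Subgroup (Matrix.SpecialLinearGroup (Fin n) ℝ))
    [Countable Γ]
    (hdense : ∀ M : Matrix (Fin n) (Fin n) ℝ, M.det = 1 →
      M ∈ closure ((fun A : Matrix.SpecialLinearGroup (Fin n) ℝ =>
        (A : Matrix (Fin n) (Fin n) ℝ)) '' (Γ : Set (Matrix.SpecialLinearGroup (Fin n) ℝ)))) :
    ∀ S : Set (Fin n → ℝ), MeasurableSet S →
      (∀ A : Matrix.SpecialLinearGroup (Fin n) ℝ, A ∈ Γ →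
        (fun x : Fin n → ℝ => (A : Matrix (Fin n) (Fin n) ℝ).mulVec x) '' S = S) →
      volume S = 0 ∨ volume Sᶜ = 0 := by
  intro S hS hinv
  haveI : NeZero n := ⟨by omega⟩
  by_contra hcon
  push_neg at hcon
  obtain ⟨hS0, hSc0⟩ := hcon
  -- preimage invariance
  have hpre : ∀ B : Matrix.SpecialLinearGroup (Fin n) ℝ, B ∈ Γ →
      (fun v => (B : Matrix (Fin n) (Fin n) ℝ).mulVec v) ⁻¹' S = S := by
    intro B hB
    have hinj : Function.Injective fun v => (B : Matrix (Fin n) (Fin n) ℝ).mulVec v := by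
      intro u v huv
      have h1 : ∀ w, ((B⁻¹ : Matrix.SpecialLinearGroup (Fin n) ℝ) : Matrix (Fin n) (Fin n) ℝ).mulVec
          ((B : Matrix (Fin n) (Fin n) ℝ).mulVec w) = w := by
        intro w
        rw [Matrix.mulVec_mulVec, ← Matrix.SpecialLinearGroup.coe_mul, inv_mul_cancel,
          Matrix.SpecialLinearGroup.coe_one, Matrix.one_mulVec]
      rw [← h1 u, ← h1 v]
      exact congrArg _ huv
    conv_lhs => rw [← hinv B hB]
    exact hinj.preimage_image S
  -- density points
  obtain ⟨x, hxS, hx0, hxT⟩ := stmt12_density_pt n S S hS hS0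
  obtain ⟨y, hyS, hy0, hyT⟩ := stmt12_density_pt n S Sᶜ hS hSc0
  rw [Set.indicator_of_mem hxS, Pi.one_apply] at hxT
  rw [Set.indicator_of_notMem hyS] at hyT
  -- transitivity
  obtain ⟨M₀, hM₀det, hM₀xy⟩ := stmt12_lemC n hn x y hx0 hy0
  set C : ℝ := ‖stmt12FF n M₀‖ + 1 with hC
  set K : ℝ := C + 1 with hK
  have hC1 : 1 ≤ C := by
    have := norm_nonneg (stmt12FF n M₀); rw [hC]; linarith
  have hK0 : 0 < K := by rw [hK]; linarith
  have hKtop : ENNReal.ofReal (K ^ n) ≠ 0 := by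
    simp [ENNReal.ofReal_eq_zero, not_le]
    positivity
  set ε : ENNReal := (ENNReal.ofReal (K ^ n))⁻¹ / 4 with hε
  have hε0 : 0 < ε := by
    rw [hε]
    exact ENNReal.div_pos (by simp [ENNReal.inv_ne_zero]) (by norm_num)
  -- eventual statements
  have hx_ev : ∀ᶠ r in 𝓝[>] (0:ℝ),
      (1/2 : ENNReal) < volume (S ∩ closedBall x r) / volume (closedBall x r) :=
    hxT.eventually (lt_mem_nhds (by norm_num))
  have hmulK : Tendsto (fun r : ℝ => K * r) (𝓝[>] 0) (𝓝[>] 0) := by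
    refine tendsto_nhdsWithin_of_tendsto_nhds_of_eventually_within _ ?_ ?_
    · have h1 : Tendsto (fun r : ℝ => K * r) (𝓝 0) (𝓝 (K * 0)) :=
        (continuous_const.mul continuous_id).tendsto 0
      simpa using h1.mono_left nhdsWithin_le_nhds
    · filter_upwards [self_mem_nhdsWithin] with r hr
      exact mul_pos hK0 hr
  have hy_ev : ∀ᶠ r in 𝓝[>] (0:ℝ),
      volume (S ∩ closedBall y (K*r)) / volume (closedBall y (K*r)) < ε := by
    have := (hyT.comp hmulK).eventually (gt_mem_nhds hε0)
    simpa [Function.comp] using this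
  obtain ⟨r, ⟨hr1, hr2⟩, hrpos⟩ :=
    ((hx_ev.and hy_ev).and eventually_mem_nhdsWithin).exists
  rw [Set.mem_Ioi] at hrpos
  -- pick A ∈ Γ close to M₀
  have hgcont : Continuous fun M : Matrix (Fin n) (Fin n) ℝ => M.mulVec x :=
    ((ContinuousLinearMap.apply ℝ (Fin n → ℝ) x).continuous).comp (stmt12FF_cont n)
  set U : Set (Matrix (Fin n) (Fin n) ℝ) :=
    (stmt12FF n) ⁻¹' Metric.ball (stmt12FF n M₀) 1 ∩
      (fun M => M.mulVec x) ⁻¹' Metric.ball y r with hU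
  have hUopen : IsOpen U :=
    ((isOpen_ball).preimage (stmt12FF_cont n)).inter ((isOpen_ball).preimage hgcont)
  have hM₀U : M₀ ∈ U := by
    constructor
    · exact mem_ball_self one_pos
    · show M₀.mulVec x ∈ ball y r
      rw [hM₀xy]; exact mem_ball_self hrpos
  obtain ⟨MA, hMAU, hMAim⟩ := (mem_closure_iff.1 (hdense M₀ hM₀det)) U hUopen hM₀U
  obtain ⟨A, hAΓ, rfl⟩ := hMAim
  -- geometry: A maps closedBall x r into closedBall y (K * r)
  have hnormA : ‖stmt12FF n ((A : Matrix (Fin n) (Fin n) ℝ))‖ ≤ C := by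
    have h1 : dist (stmt12FF n ((A : Matrix (Fin n) (Fin n) ℝ))) (stmt12FF n M₀) < 1 :=
      mem_ball.1 hMAU.1
    rw [dist_eq_norm] at h1
    calc ‖stmt12FF n ((A : Matrix (Fin n) (Fin n) ℝ))‖
        = ‖stmt12FF n M₀ + (stmt12FF n ((A : Matrix (Fin n) (Fin n) ℝ)) - stmt12FF n M₀)‖ := by
          congr 1; abel
      _ ≤ ‖stmt12FF n M₀‖ + ‖stmt12FF n ((A : Matrix (Fin n) (Fin n) ℝ)) - stmt12FF n M₀‖ :=
          norm_add_le _ _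
      _ ≤ C := by rw [hC]; linarith
  have hgeom : ∀ v ∈ closedBall x r,
      (A : Matrix (Fin n) (Fin n) ℝ).mulVec v ∈ closedBall y (K * r) := by
    intro v hv
    rw [mem_closedBall]
    have h2 : dist ((A : Matrix (Fin n) (Fin n) ℝ).mulVec v)
        ((A : Matrix (Fin n) (Fin n) ℝ).mulVec x) ≤ C * r := by
      rw [dist_eq_norm, ← stmt12FF_apply, ← stmt12FF_apply, ← map_sub]
      calc ‖stmt12FF n ((A : Matrix (Fin n) (Fin n) ℝ)) (v - x)‖
          ≤ ‖stmt12FF n ((A : Matrix (Fin n) (Fin n) ℝ))‖ * ‖v - x‖ :=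
            ContinuousLinearMap.le_opNorm _ _
        _ ≤ C * r := by
            have hvx : ‖v - x‖ ≤ r := by rw [← dist_eq_norm]; exact mem_closedBall.1 hv
            exact mul_le_mul hnormA hvx (norm_nonneg _) (le_trans zero_le_one hC1)
    have h3 : dist ((A : Matrix (Fin n) (Fin n) ℝ).mulVec x) y < r := mem_ball.1 hMAU.2
    calc dist ((A : Matrix (Fin n) (Fin n) ℝ).mulVec v) y
        ≤ dist ((A : Matrix (Fin n) (Fin n) ℝ).mulVec v)
            ((A : Matrix (Fin n) (Fin n) ℝ).mulVec x) +
          dist ((A : Matrix (Fin n) (Fin n) ℝ).mulVec x) y := dist_triangle _ _ _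
      _ ≤ C * r + r := by linarith
      _ = K * r := by rw [hK]; ring
  -- measure chain
  have hAinvdet : (((A⁻¹ : Matrix.SpecialLinearGroup (Fin n) ℝ) :
      Matrix (Fin n) (Fin n) ℝ)).det = 1 := (A⁻¹).2
  set g : (Fin n → ℝ) → (Fin n → ℝ) :=
    fun v => ((A⁻¹ : Matrix.SpecialLinearGroup (Fin n) ℝ) :
      Matrix (Fin n) (Fin n) ℝ).mulVec v with hg
  have hginvS : g ⁻¹' S = S := hpre A⁻¹ (inv_mem hAΓ)
  have hid : ∀ v, (A : Matrix (Fin n) (Fin n) ℝ).mulVec (g v) = v := by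
    intro v
    rw [hg]
    simp only
    rw [Matrix.mulVec_mulVec, ← Matrix.SpecialLinearGroup.coe_mul, mul_inv_cancel,
      Matrix.SpecialLinearGroup.coe_one, Matrix.one_mulVec]
  have hsub : g ⁻¹' (S ∩ closedBall x r) ⊆ S ∩ closedBall y (K * r) := by
    intro v hv
    rcases hv with ⟨hv1, hv2⟩
    refine ⟨?_, ?_⟩
    · have hv1' : v ∈ g ⁻¹' S := hv1
      rwa [hginvS] at hv1'
    · have := hgeom (g v) hv2
      rwa [hid v] at this
  have hEq : volume (g ⁻¹' (S ∩ closedBall x r)) = volume (S ∩ closedBall x r) :=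
    stmt12_meas_pres n _ hAinvdet _ (hS.inter measurableSet_closedBall)
  have hle : volume (S ∩ closedBall x r) ≤ volume (S ∩ closedBall y (K * r)) := by
    rw [← hEq]; exact measure_mono hsub
  -- volumes of the balls
  have hvolB : volume (closedBall x r) = ENNReal.ofReal ((2*r)^n) := by
    rw [Real.volume_pi_closedBall x hrpos.le, Fintype.card_fin]
  have hvolD : volume (closedBall y (K*r)) = ENNReal.ofReal ((2*(K*r))^n) := by
    rw [Real.volume_pi_closedBall y (by positivity), Fintype.card_fin]
  have hB0 : volume (closedBall x r) ≠ 0 := by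
    rw [hvolB]; simp only [ne_eq, ENNReal.ofReal_eq_zero, not_le]; positivity
  have hBtop : volume (closedBall x r) ≠ ⊤ := by rw [hvolB]; exact ENNReal.ofReal_ne_top
  have hD0 : volume (closedBall y (K*r)) ≠ 0 := by
    rw [hvolD]; simp only [ne_eq, ENNReal.ofReal_eq_zero, not_le]; positivity
  have hDtop : volume (closedBall y (K*r)) ≠ ⊤ := by rw [hvolD]; exact ENNReal.ofReal_ne_top
  have hlow : (1/2 : ENNReal) * volume (closedBall x r) ≤ volume (S ∩ closedBall x r) :=
    (ENNReal.le_div_iff_mul_le (Or.inl hB0) (Or.inl hBtop)).1 hr1.le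
  have hhigh : volume (S ∩ closedBall y (K*r)) ≤ ε * volume (closedBall y (K*r)) := by
    exact (ENNReal.div_le_iff_le_mul (Or.inl hD0) (Or.inl hDtop)).1 hr2.le
  have hchain : (1/2 : ENNReal) * volume (closedBall x r) ≤ ε * volume (closedBall y (K*r)) :=
    hlow.trans (hle.trans hhigh)
  rw [hvolB, hvolD] at hchain
  have h4 : ENNReal.ofReal ((2*(K*r))^n)
      = ENNReal.ofReal (K^n) * ENNReal.ofReal ((2*r)^n) := by
    rw [← ENNReal.ofReal_mul (by positivity)]
    rw [show (2*(K*r)) = K * (2*r) by ring, mul_pow]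
  rw [h4] at hchain
  have h5 : ε * (ENNReal.ofReal (K^n) * ENNReal.ofReal ((2*r)^n))
      = (1/4 : ENNReal) * ENNReal.ofReal ((2*r)^n) := by
    rw [hε, div_eq_mul_inv]
    have hx1 : (ENNReal.ofReal (K^n))⁻¹ * (4:ENNReal)⁻¹ *
        (ENNReal.ofReal (K^n) * ENNReal.ofReal ((2*r)^n))
        = ((ENNReal.ofReal (K^n))⁻¹ * ENNReal.ofReal (K^n)) *
          ((4:ENNReal)⁻¹ * ENNReal.ofReal ((2*r)^n)) := by ring
    rw [hx1, ENNReal.inv_mul_cancel hKtop ENNReal.ofReal_ne_top, one_mul, one_div]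
  rw [h5] at hchain
  have ha0 : ENNReal.ofReal ((2*r)^n) ≠ 0 := by
    simp only [ne_eq, ENNReal.ofReal_eq_zero, not_le]; positivity
  have := (ENNReal.mul_le_mul_iff_left ha0 ENNReal.ofReal_ne_top).1 hchain
  norm_num at this
end

section
/- Let Γ be a countably infinite group, let (X,μ) be a standard probability space with a measure-preserving Γ-action that is mixing, and let (Y,ν) be a standard σ-finite measure space (ν ≠ 0) with a nonsingular Γ-action that is properly ergodic. Then the diagonal action of Γ on (X × Y, μ × ν), g·(x,y) = (g·x, g·y), is ergodic. -/
open MeasureTheory Filter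
open scoped ENNReal symmDiff
set_option linter.unusedSectionVars false

section Aux

variable {Γ Y : Type*} [Group Γ] [Countable Γ] [MeasurableSpace Y]
  {ν : Measure Y} {S : Γ → Y → Y}

lemma act_right_inv (hS1 : ∀ y : Y, S 1 y = y)
    (hSmul : ∀ (g h : Γ) (y : Y), S (g * h) y = S g (S h y))
    (g : Γ) (y : Y) : S g (S g⁻¹ y) = y := by
  rw [← hSmul, mul_inv_cancel, hS1]

lemma act_left_inv (hS1 : ∀ y : Y, S 1 y = y)
    (hSmul : ∀ (g h : Γ) (y : Y), S (g * h) y = S g (S h y))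
    (g : Γ) (y : Y) : S g⁻¹ (S g y) = y := by
  rw [← hSmul, inv_mul_cancel, hS1]

lemma invariant_level (hS1 : ∀ y : Y, S 1 y = y)
    (hSmul : ∀ (g h : Γ) (y : Y), S (g * h) y = S g (S h y))
    {f : Y → ℝ≥0∞} (hinv : ∀ (g : Γ) (y : Y), f (S g y) = f y)
    (t : ℝ≥0∞) (g : Γ) : S g '' {y | f y < t} = {y | f y < t} := by
  ext z
  constructor
  · rintro ⟨y, hy, rfl⟩
    simpa [Set.mem_setOf_eq, hinv g y] using hy
  · intro hz
    exact ⟨S g⁻¹ z, by simpa [Set.mem_setOf_eq, hinv g⁻¹ z] using hz,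
      act_right_inv hS1 hSmul g z⟩

lemma ae_const_of_invariant
    (hS1 : ∀ y : Y, S 1 y = y)
    (hSmul : ∀ (g h : Γ) (y : Y), S (g * h) y = S g (S h y))
    (hSerg : IsErgodicAction ν S)
    (f : Y → ℝ≥0∞) (hf : Measurable f)
    (hinv : ∀ (g : Γ) (y : Y), f (S g y) = f y) :
    ∃ a : ℝ≥0∞, ∀ᵐ y ∂ν, f y = a := by
  have hdich : ∀ t : ℝ≥0∞, ν {y | f y < t} = 0 ∨ ν {y | f y < t}ᶜ = 0 := fun t =>
    hSerg _ (hf measurableSet_Iio) (invariant_level hS1 hSmul hinv t)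
  set A : Set ℝ≥0∞ := {t | ν {y | f y < t}ᶜ = 0} with hA
  refine ⟨sInf A, ?_⟩
  have h1 : ν {y | f y < sInf A} = 0 := by
    have hsub : {y | f y < sInf A} ⊆
        ⋃ q : ℚ, {y | f y < (Real.toNNReal q : ℝ≥0∞) ∧ (Real.toNNReal q : ℝ≥0∞) < sInf A} := by
      intro y hy
      obtain ⟨q, _, h1, h2⟩ := ENNReal.lt_iff_exists_rat_btwn.1 hy
      exact Set.mem_iUnion.2 ⟨q, h1, h2⟩
    refine measure_mono_null hsub (measure_iUnion_null fun q => ?_)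
    by_cases hq : (Real.toNNReal q : ℝ≥0∞) < sInf A
    · have hqA : (Real.toNNReal q : ℝ≥0∞) ∉ A := fun h => absurd (sInf_le h) (not_le.2 hq)
      exact measure_mono_null (fun y hy => hy.1) ((hdich _).resolve_right hqA)
    · have : {y | f y < (Real.toNNReal q : ℝ≥0∞) ∧ (Real.toNNReal q : ℝ≥0∞) < sInf A} = ∅ := by
        ext y; simp only [Set.mem_setOf_eq, Set.mem_empty_iff_false, iff_false]
        exact fun h => hq h.2
      simp [this]
  have h2 : ν {y | sInf A < f y} = 0 := by
    have hsub : {y | sInf A < f y} ⊆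
        ⋃ q : ℚ, {y | sInf A < (Real.toNNReal q : ℝ≥0∞) ∧ (Real.toNNReal q : ℝ≥0∞) < f y} := by
      intro y hy
      obtain ⟨q, _, h1, h2⟩ := ENNReal.lt_iff_exists_rat_btwn.1 hy
      exact Set.mem_iUnion.2 ⟨q, h1, h2⟩
    refine measure_mono_null hsub (measure_iUnion_null fun q => ?_)
    by_cases hq : sInf A < (Real.toNNReal q : ℝ≥0∞)
    · obtain ⟨t, htA, htq⟩ := sInf_lt_iff.1 hq
      refine measure_mono_null (fun y hy => ?_) htA
      simp only [Set.mem_compl_iff, Set.mem_setOf_eq, not_lt]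
      exact le_trans htq.le hy.2.le
    · have : {y | sInf A < (Real.toNNReal q : ℝ≥0∞) ∧ (Real.toNNReal q : ℝ≥0∞) < f y} = ∅ := by
        ext y; simp only [Set.mem_setOf_eq, Set.mem_empty_iff_false, iff_false]
        exact fun h => hq h.1
      simp [this]
  rw [ae_iff]
  refine measure_mono_null (fun y hy => ?_) (measure_union_null h1 h2)
  exact (Ne.lt_or_gt hy : _ ∨ _)
lemma null_of_finite_hits [StandardBorelSpace Y] (hν : ν ≠ 0)
    (hS1 : ∀ y : Y, S 1 y = y)
    (hSmul : ∀ (g h : Γ) (y : Y), S (g * h) y = S g (S h y))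
    (hSmeas : ∀ g : Γ, Measurable (S g))
    (hSerg : IsErgodicAction ν S)
    (hSproper : ∀ y : Y, ν (Set.range fun g : Γ => S g y) = 0)
    (W : Set Y) (hW : MeasurableSet W)
    (hfin : ∀ y : Y, {g : Γ | S g y ∈ W}.Finite) : ν W = 0 := by
  classical
  have huniv : ν Set.univ ≠ 0 := fun h => hν (Measure.measure_univ_eq_zero.1 h)
  obtain ⟨ι, hι⟩ := exists_measurableEmbedding_real Y
  set ρ : Y → ℝ≥0∞ := fun y => ENNReal.ofReal (Real.arctan (ι y) + 2) with hρ
  have harcpos : ∀ r : ℝ, 0 < Real.arctan r + 2 := by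
    intro r
    have h1 : -(Real.pi / 2) < Real.arctan r := Real.neg_pi_div_two_lt_arctan r
    have h2 : Real.pi < 3.15 := Real.pi_lt_d2
    linarith
  have hρ_inj : Function.Injective ρ := by
    intro y z hyz
    have := (ENNReal.ofReal_eq_ofReal_iff (harcpos (ι y)).le (harcpos (ι z)).le).1 hyz
    have h2 : Real.arctan (ι y) = Real.arctan (ι z) := by linarith
    exact hι.injective (Real.arctan_injective h2)
  have hρ_meas : Measurable ρ :=
    ENNReal.measurable_ofReal.comp ((Real.continuous_arctan.measurable.comp hι.measurable).add
      measurable_const)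
  have hρ_top : ∀ y, ρ y ≠ ⊤ := fun y => ENNReal.ofReal_ne_top
  set h : Γ → Y → ℝ≥0∞ := fun g y => if S g y ∈ W then ρ (S g y) else ⊤ with hh
  set m : Y → ℝ≥0∞ := fun y => ⨅ g : Γ, h g y with hm
  have hm_meas : Measurable m :=
    Measurable.iInf fun g => Measurable.ite ((hSmeas g) hW) (hρ_meas.comp (hSmeas g))
      measurable_const
  have hm_inv : ∀ (g : Γ) (y : Y), m (S g y) = m y := by
    intro g y
    have hcongr : ∀ k : Γ, h k (S g y) = h (k * g) y := by
      intro k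
      simp only [hh, ← hSmul k g y]
    have e1 : m (S g y) = ⨅ k : Γ, h (k * g) y := iInf_congr hcongr
    have e2 : (⨅ k : Γ, h (k * g) y) = ⨅ k : Γ, h k y := by
      apply le_antisymm
      · exact le_iInf fun k => iInf_le_of_le (k * g⁻¹)
          (le_of_eq (by rw [inv_mul_cancel_right]))
      · exact le_iInf fun k => iInf_le_of_le (k * g) le_rfl
    rw [e1, e2]
  obtain ⟨c, hc⟩ := ae_const_of_invariant hS1 hSmul hSerg m hm_meas hm_inv
  rw [ae_iff] at hc
  by_cases hcT : c = ⊤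
  · refine measure_mono_null (fun y hy => ?_) hc
    have h1y : h 1 y = ρ y := by simp only [hh, hS1 y, if_pos hy]
    have : m y ≤ ρ y := h1y ▸ iInf_le (fun g => h g y) 1
    simp only [Set.mem_setOf_eq, hcT]
    intro hEq
    rw [hEq] at this
    exact (hρ_top y) (top_le_iff.1 this)
  · exfalso
    have hatt : ∀ y : Y, m y = c → ∃ g : Γ, S g y ∈ W ∧ ρ (S g y) = c := by
      intro y hy
      have hne : {g : Γ | S g y ∈ W}.Nonempty := by
        by_contra hemp
        rw [Set.not_nonempty_iff_eq_empty] at hemp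
        have : m y = ⊤ := by
          simp only [hm]
          refine iInf_eq_top.2 fun g => ?_
          have : S g y ∉ W := fun hg => by
            have : g ∈ {g : Γ | S g y ∈ W} := hg
            simp [hemp] at this
          simp only [hh, if_neg this]
        exact (hcT (hy.symm.trans this)).elim
      obtain ⟨g₀, hg₀, hmin⟩ := Set.exists_min_image _ (fun g => ρ (S g y)) (hfin y) hne
      refine ⟨g₀, hg₀, ?_⟩
      have hle : m y ≤ ρ (S g₀ y) := by
        have : h g₀ y = ρ (S g₀ y) := by simp only [hh]; exact if_pos hg₀
        exact this ▸ iInf_le (fun g => h g y) g₀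
      have hge : ρ (S g₀ y) ≤ m y := by
        refine le_iInf fun g => ?_
        by_cases hg : S g y ∈ W
        · simpa only [hh, if_pos hg] using hmin g hg
        · simp only [hh, if_neg hg]; exact le_top
      rw [← hy]
      exact le_antisymm hge hle
    have hGne : {y : Y | m y = c}.Nonempty := by
      rw [Set.nonempty_iff_ne_empty]
      intro hemp
      refine huniv (measure_mono_null (fun y _ => ?_) hc)
      simp only [Set.mem_setOf_eq]
      intro hEq
      exact absurd (hemp ▸ hEq : y ∈ ({} : Set Y)) (Set.notMem_empty y)
    obtain ⟨y₀, hy₀⟩ := hGne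
    obtain ⟨g₀, hg₀W, hg₀⟩ := hatt y₀ hy₀
    set z₀ := S g₀ y₀ with hz₀
    have hsub : {y : Y | m y = c} ⊆ Set.range fun g : Γ => S g z₀ := by
      intro y hy
      obtain ⟨g, hgW, hgρ⟩ := hatt y hy
      have hzz : S g y = z₀ := hρ_inj (by rw [hgρ, hg₀])
      exact ⟨g⁻¹, by rw [← hzz]; exact act_left_inv hS1 hSmul g y⟩
    have h1 : ν {y : Y | m y = c} = 0 := measure_mono_null hsub (hSproper z₀)
    refine huniv (measure_mono_null (fun y _ => ?_) (measure_union_null h1 hc))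
    by_cases hy : m y = c
    · exact Or.inl hy
    · exact Or.inr hy
end Aux

theorem stmt_14 {Γ X Y : Type*} [Group Γ] [Countable Γ] [Infinite Γ]
    [MeasurableSpace X] [StandardBorelSpace X]
    [MeasurableSpace Y] [StandardBorelSpace Y]
    (μ : Measure X) [IsProbabilityMeasure μ]
    (ν : Measure Y) [SigmaFinite ν] (hν : ν ≠ 0)
    (T : Γ → X → X) (hT1 : ∀ x : X, T 1 x = x)
    (hTmul : ∀ (g h : Γ) (x : X), T (g * h) x = T g (T h x))
    (hTmp : ∀ g : Γ, MeasurePreserving (T g) μ μ)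
    (hmix : ∀ A B : Set X, MeasurableSet A → MeasurableSet B →
      Tendsto (fun g : Γ => μ (A ∩ T g '' B)) cofinite (nhds (μ A * μ B)))
    (S : Γ → Y → Y) (hS1 : ∀ y : Y, S 1 y = y)
    (hSmul : ∀ (g h : Γ) (y : Y), S (g * h) y = S g (S h y))
    (hSns : ∀ g : Γ, Measure.QuasiMeasurePreserving (S g) ν ν)
    (hSerg : IsErgodicAction ν S)
    (hSproper : ∀ y : Y, ν (Set.range fun g : Γ => S g y) = 0) :
    IsErgodicAction (μ.prod ν) (fun (g : Γ) (p : X × Y) => (T g p.1, S g p.2)) := by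
  intro E hE hEinv
  have huniv : ν Set.univ ≠ 0 := fun h => hν (Measure.measure_univ_eq_zero.1 h)
  have hSmeas : ∀ g : Γ, Measurable (S g) := fun g => (hSns g).measurable
  have hSinj : ∀ g : Γ, Function.Injective (S g) := by
    intro g a b hab
    have := congrArg (S g⁻¹) hab
    rwa [act_left_inv hS1 hSmul, act_left_inv hS1 hSmul] at this
  -- sections
  set sec : Y → Set X := fun y => (fun x => (x, y)) ⁻¹' E with hsec
  have hsec_meas : ∀ y, MeasurableSet (sec y) := fun y => measurable_prodMk_right hE
  -- key equivariance of sections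
  have hK : ∀ (g : Γ) (y : Y), T g '' sec y = sec (S g y) := by
    intro g y
    ext x
    constructor
    · rintro ⟨x', hx', rfl⟩
      have hx'E : ((x' : X), y) ∈ E := hx'
      have : (fun p : X × Y => (T g p.1, S g p.2)) (x', y) ∈ E := by
        rw [← hEinv g]
        exact Set.mem_image_of_mem _ hx'E
      exact this
    · intro hx
      have hx' : ((x : X), S g y) ∈ E := hx
      rw [← hEinv g] at hx'
      obtain ⟨p, hp, hpe⟩ := hx'
      have h2 : S g p.2 = S g y := congrArg Prod.snd hpe
      have hp2 : p.2 = y := hSinj g h2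
      refine ⟨p.1, ?_, congrArg Prod.fst hpe⟩
      show (p.1, y) ∈ E
      rw [← hp2]
      exact hp
  -- images under T g preserve μ
  have hTinvl : ∀ (g : Γ) (x : X), T g⁻¹ (T g x) = x := by
    intro g x; rw [← hTmul, inv_mul_cancel, hT1]
  have hTinvr : ∀ (g : Γ) (x : X), T g (T g⁻¹ x) = x := by
    intro g x; rw [← hTmul, mul_inv_cancel, hT1]
  have himg : ∀ (g : Γ) (B : Set X), MeasurableSet B → μ (T g '' B) = μ B := by
    intro g B hB
    have himg_eq : T g '' B = T g⁻¹ ⁻¹' B := by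
      ext x
      constructor
      · rintro ⟨x', hx', rfl⟩
        show T g⁻¹ (T g x') ∈ B
        rw [hTinvl]; exact hx'
      · intro hx
        exact ⟨T g⁻¹ x, hx, hTinvr g x⟩
    rw [himg_eq, (hTmp g⁻¹).measure_preimage hB.nullMeasurableSet]
  -- invariant section-measure function
  set f : Y → ℝ≥0∞ := fun y => μ (sec y) with hf
  have hf_meas : Measurable f := measurable_measure_prodMk_right hE
  have hf_inv : ∀ (g : Γ) (y : Y), f (S g y) = f y := by
    intro g y
    show μ (sec (S g y)) = μ (sec y)
    rw [← hK g y, himg g _ (hsec_meas y)]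
  obtain ⟨a, ha⟩ := ae_const_of_invariant hS1 hSmul hSerg f hf_meas hf_inv
  have haconull : ν {y | f y = a}ᶜ = 0 := by
    rw [ae_iff] at ha
    exact ha
  have hapos : ν {y | f y = a} ≠ 0 := by
    intro h0
    refine huniv (measure_mono_null (fun y _ => ?_) (measure_union_null h0 haconull))
    by_cases hy : f y = a
    · exact Or.inl hy
    · exact Or.inr hy
  by_cases ha0 : a = 0
  · left
    rw [Measure.prod_apply_symm hE]
    refine (lintegral_eq_zero_iff hf_meas).2 ?_
    refine ha.mono fun y hy => ?_
    simp only [Pi.zero_apply, hy, ha0]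
  by_cases ha1 : a = 1
  · right
    rw [Measure.prod_apply_symm hE.compl]
    have hc_meas : Measurable fun y => μ ((fun x => (x, y)) ⁻¹' Eᶜ) :=
      measurable_measure_prodMk_right hE.compl
    refine (lintegral_eq_zero_iff hc_meas).2 ?_
    refine ha.mono fun y hy => ?_
    show μ ((fun x => (x, y)) ⁻¹' Eᶜ) = 0
    have hcompl : (fun x => (x, y)) ⁻¹' Eᶜ = (sec y)ᶜ := rfl
    rw [hcompl, measure_compl (hsec_meas y) (measure_ne_top μ _)]
    have : μ (sec y) = 1 := by rw [show μ (sec y) = f y from rfl, hy, ha1]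
    simp [this]
  -- nondegenerate case: derive a contradiction
  exfalso
  have ha_le : a ≤ 1 := by
    have hne : {y | f y = a}.Nonempty := by
      rw [Set.nonempty_iff_ne_empty]
      intro hemp
      exact hapos (by rw [hemp]; exact measure_empty)
    obtain ⟨y, hy⟩ := hne
    rw [← hy]
    exact prob_le_one
  have ha_lt : a < 1 := lt_of_le_of_ne ha_le ha1
  have ha_pos : (0 : ℝ≥0∞) < a := pos_iff_ne_zero.2 ha0
  have ha_top : a ≠ ⊤ := (ha_lt.trans ENNReal.one_lt_top).ne
  have haa : a * a < a := by
    calc a * a < 1 * a := by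
          rw [mul_comm 1 a]; exact ENNReal.mul_lt_mul_right ha0 ha_top ha_lt
    _ = a := one_mul a
  set ε : ℝ≥0∞ := (a - a * a) / 5 with hε
  have hε0 : ε ≠ 0 := by
    refine (ENNReal.div_pos ?_ (by norm_num)).ne'
    exact (tsub_pos_of_lt haa).ne'
  have hε_top : ε ≠ ⊤ := by
    refine (ENNReal.div_lt_top ?_ (by norm_num)).ne
    exact (tsub_le_self.trans_lt (ha_lt.trans ENNReal.one_lt_top)).ne
  have h5ε : a * a + 5 * ε = a := by
    rw [hε, ENNReal.mul_div_cancel' (by norm_num) (by norm_num)]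
    exact add_tsub_cancel_of_le haa.le
  -- countable measure-dense family
  obtain ⟨𝒜, h𝒜count, h𝒜⟩ := exists_countable_measureDense (μ := μ)
  -- candidate sets
  set Z : Set X → Set Y := fun A => {y | μ (sec y ∆ A) < ε ∧ f y = a} with hZ
  have hZ_meas : ∀ A ∈ 𝒜, MeasurableSet (Z A) := by
    intro A hA
    have hAm : MeasurableSet A := h𝒜.measurable A hA
    have hsd : ∀ y : Y, sec y ∆ A = (fun x => (x, y)) ⁻¹' (E ∆ (A ×ˢ (Set.univ : Set Y))) := by
      intro y
      ext x
      simp only [Set.mem_symmDiff, Set.mem_preimage, Set.mem_prod, Set.mem_univ, and_true, hsec]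
    have hEA : MeasurableSet (E ∆ (A ×ˢ (Set.univ : Set Y))) :=
      (hE.diff (hAm.prod MeasurableSet.univ)).union ((hAm.prod MeasurableSet.univ).diff hE)
    have hmeas1 : Measurable fun y => μ (sec y ∆ A) := by
      simp only [fun y => hsd y]
      exact measurable_measure_prodMk_right hEA
    exact (hmeas1 measurableSet_Iio).inter (hf_meas (measurableSet_singleton a))
  -- covering
  have hcover : {y | f y = a} ⊆ ⋃ A ∈ 𝒜, Z A := by
    intro y hy
    obtain ⟨A, hA𝒜, hAd⟩ := h𝒜.approx (sec y) (hsec_meas y) (measure_ne_top μ _)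
      ε.toReal (ENNReal.toReal_pos hε0 hε_top)
    rw [ENNReal.ofReal_toReal hε_top] at hAd
    exact Set.mem_biUnion hA𝒜 ⟨hAd, hy⟩
  obtain ⟨A, hA𝒜, hZA⟩ : ∃ A ∈ 𝒜, ν (Z A) ≠ 0 := by
    by_contra hcon
    push_neg at hcon
    refine hapos (measure_mono_null hcover ?_)
    exact (measure_biUnion_null_iff h𝒜count).2 hcon
  have hAm : MeasurableSet A := h𝒜.measurable A hA𝒜
  -- finiteness of hitting times on Z A
  have hZW : ∀ y ∈ Z A, {g : Γ | S g y ∈ Z A}.Finite := by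
    intro y hy
    obtain ⟨hyΔ, hyf⟩ := hy
    have hμA_le : μ A ≤ a + ε := by
      calc μ A = μ (A ∩ sec y) + μ (A \ sec y) := (measure_inter_add_diff A (hsec_meas y)).symm
        _ ≤ μ (sec y) + μ (sec y ∆ A) := by
            refine add_le_add (measure_mono Set.inter_subset_right) (measure_mono ?_)
            intro x hx
            exact Or.inr ⟨hx.1, hx.2⟩
        _ ≤ a + ε := add_le_add (le_of_eq hyf) hyΔ.le
    have hmix' := hmix A (sec y) hAm (hsec_meas y)
    rw [show μ (sec y) = a from hyf] at hmix'
    have hμAa_top : μ A * a ≠ ⊤ := ENNReal.mul_ne_top (measure_ne_top μ A) ha_top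
    have hev : ∀ᶠ g in cofinite, μ (A ∩ T g '' sec y) < μ A * a + ε :=
      hmix'.eventually_lt_const (ENNReal.lt_add_right hμAa_top hε0)
    rw [eventually_cofinite] at hev
    refine hev.subset ?_
    intro g hg
    simp only [Set.mem_setOf_eq, not_lt]
    obtain ⟨hgΔ, hgf⟩ := hg
    -- lower bound on returns
    have hlow : a ≤ μ (A ∩ T g '' sec y) + ε := by
      rw [hK g y]
      calc a = μ (sec (S g y)) := hgf.symm
        _ = μ (sec (S g y) ∩ A) + μ (sec (S g y) \ A) :=
            (measure_inter_add_diff _ hAm).symm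
        _ ≤ μ (A ∩ sec (S g y)) + ε := by
            refine add_le_add (le_of_eq (by rw [Set.inter_comm])) ?_
            refine le_trans (measure_mono ?_) hgΔ.le
            intro x hx
            exact Or.inl ⟨hx.1, hx.2⟩
    -- upper bound estimate
    have hub : μ A * a + ε ≤ a * a + 2 * ε := by
      calc μ A * a + ε ≤ (a + ε) * a + ε :=
            add_le_add_left (mul_le_mul_left hμA_le a) ε
        _ = a * a + ε * a + ε := by ring_nf
        _ ≤ a * a + ε * 1 + ε := by
            exact add_le_add_left (add_le_add_right (mul_le_mul_right ha_le ε) _) ε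
        _ = a * a + 2 * ε := by ring_nf
    -- conclude: if value < μ A * a + ε then a < a, contradiction
    by_contra hlt
    rw [not_le] at hlt
    have h1 : a < a * a + 2 * ε + ε := by
      calc a ≤ μ (A ∩ T g '' sec y) + ε := hlow
        _ < (μ A * a + ε) + ε := by
            exact ENNReal.add_lt_add_right hε_top hlt
        _ ≤ a * a + 2 * ε + ε := add_le_add_left hub ε
    have h2 : a * a + 2 * ε + ε < a := by
      calc a * a + 2 * ε + ε = a * a + 3 * ε := by ring
        _ < a * a + 5 * ε := ENNReal.add_lt_add_left (ENNReal.mul_ne_top ha_top ha_top)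
            (by rw [mul_comm 3 ε, mul_comm 5 ε]; exact ENNReal.mul_lt_mul_right hε0 hε_top (by norm_num))
        _ = a := h5ε
    exact absurd (h1.trans h2) (lt_irrefl a)
  -- extend to all y
  have hZW' : ∀ y : Y, {g : Γ | S g y ∈ Z A}.Finite := by
    intro y
    by_cases hy : ∃ g₀ : Γ, S g₀ y ∈ Z A
    · obtain ⟨g₀, hg₀⟩ := hy
      have hfin0 := hZW _ hg₀
      have hsub : {g : Γ | S g y ∈ Z A} ⊆ (fun h => h * g₀) '' {h : Γ | S h (S g₀ y) ∈ Z A} := by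
        intro g hg
        refine ⟨g * g₀⁻¹, ?_, by show g * g₀⁻¹ * g₀ = g; rw [inv_mul_cancel_right]⟩
        show S (g * g₀⁻¹) (S g₀ y) ∈ Z A
        rw [← hSmul, inv_mul_cancel_right]
        exact hg
      exact ((hfin0.image _).subset hsub)
    · push_neg at hy
      have : {g : Γ | S g y ∈ Z A} = ∅ := by
        ext g; simp only [Set.mem_setOf_eq, Set.mem_empty_iff_false, iff_false]
        exact hy g
      rw [this]; exact Set.finite_empty
  exact hZA (null_of_finite_hits hν hS1 hSmul hSmeas hSerg hSproper (Z A) (hZ_meas A hA𝒜) hZW')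
end
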